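/- arXiv:1501.06191 — 3 statements merged into one kernel-verified Lean document; each statement's English description precedes it below -/
import Mathlib

section
/- Let d ≥ 1 and let v, w : ℝ^d → [0,∞) be measurable functions such that w is v-moderate, i.e. w(x+y) ≤ v(x)·w(y) for all x, y ∈ ℝ^d. Then for every r, p, q ∈ [1,∞] satisfying 1/r + 1 = 1/p + 1/q and all measurable functions f, g : ℝ^d → ℝ, one has ‖(|f| ⋆ |g|)·w‖_{L^r(ℝ^d)} ≤ ‖f·v‖_{L^p(ℝ^d)} · ‖g·w‖_{L^q(ℝ^d)}, where (|f| ⋆ |g|)(x) = ∫_{ℝ^d} |f(y)| |g(x−y)| dy denotes the convolution (all norms are with respect to Lebesgue measure and may be infinite). -/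
open MeasureTheory
open scoped ENNReal

variable {d : ℕ}

local notation "E" => EuclideanSpace ℝ (Fin d)

/-- translation invariance of lintegral under `y ↦ x - y`. -/
lemma lint_sub_left (G : E → ℝ≥0∞) (hG : Measurable G) (x : E) :
    ∫⁻ y, G (x - y) = ∫⁻ y, G y :=
  (Measure.measurePreserving_sub_left volume x).lintegral_comp hG

lemma lint_sub_right (G : E → ℝ≥0∞) (hG : Measurable G) (y : E) :
    ∫⁻ x, G (x - y) = ∫⁻ x, G x :=
  (measurePreserving_sub_right volume y).lintegral_comp hG

/-- Young's inequality, finite-exponent case, in `ℝ≥0∞`. -/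
theorem young_finite (F G : E → ℝ≥0∞) (hF : Measurable F) (hG : Measurable G)
    {rr pp qq : ℝ} (hr : 1 ≤ rr) (hp : 1 ≤ pp) (hq : 1 ≤ qq)
    (h : 1 / rr + 1 = 1 / pp + 1 / qq) :
    (∫⁻ x, (∫⁻ y, F y * G (x - y)) ^ rr) ^ (1 / rr) ≤
      (∫⁻ x, F x ^ pp) ^ (1 / pp) * (∫⁻ x, G x ^ qq) ^ (1 / qq) := by
  have hr0 : (0:ℝ) < rr := lt_of_lt_of_le one_pos hr
  have hp0 : (0:ℝ) < pp := lt_of_lt_of_le one_pos hp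
  have hq0 : (0:ℝ) < qq := lt_of_lt_of_le one_pos hq
  set c1 : ℝ := 1 / rr with hc1def
  set c2 : ℝ := 1 / pp - 1 / rr with hc2def
  set c3 : ℝ := 1 / qq - 1 / rr with hc3def
  have hq1 : 1 / qq ≤ 1 := by rw [div_le_one hq0]; exact hq
  have hp1 : 1 / pp ≤ 1 := by rw [div_le_one hp0]; exact hp
  have hc1 : 0 < c1 := by positivity
  have hc2 : 0 ≤ c2 := by simp only [hc2def]; linarith
  have hc3 : 0 ≤ c3 := by simp only [hc3def]; linarith
  have hsum : c1 + c2 + c3 = 1 := by simp only [hc1def, hc2def, hc3def]; linarith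
  set IF := ∫⁻ x, F x ^ pp with hIFdef
  set IG := ∫⁻ x, G x ^ qq with hIGdef
  -- degenerate cases
  have hGm : ∀ x : E, Measurable fun y => G (x - y) :=
    fun x => hG.comp (measurable_const.sub measurable_id)
  by_cases hIG0 : IG = 0
  · have hG0 : G =ᵐ[volume] 0 := by
      have h2 := (lintegral_eq_zero_iff (hG.pow_const qq)).mp hIG0
      filter_upwards [h2] with z hz
      simpa [ENNReal.rpow_eq_zero_iff, hq0, hq0.not_gt] using hz
    have hin : ∀ x : E, (∫⁻ y, F y * G (x - y)) = 0 := by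
      intro x
      have hae : ∀ᵐ y : E ∂volume, G (x - y) = 0 :=
        (Measure.measurePreserving_sub_left volume x).quasiMeasurePreserving.ae hG0
      rw [lintegral_congr_ae (g := fun _ => 0) (by filter_upwards [hae] with y hy; simp [hy])]
      simp
    simp only [hin]
    rw [ENNReal.zero_rpow_of_pos hr0, lintegral_zero, ENNReal.zero_rpow_of_pos (by positivity)]
    exact zero_le
  by_cases hIF0 : IF = 0
  · have hF0 : F =ᵐ[volume] 0 := by
      have h2 := (lintegral_eq_zero_iff (hF.pow_const pp)).mp hIF0
      filter_upwards [h2] with z hz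
      simpa [ENNReal.rpow_eq_zero_iff, hp0, hp0.not_gt] using hz
    have hin : ∀ x : E, (∫⁻ y, F y * G (x - y)) = 0 := by
      intro x
      rw [lintegral_congr_ae (g := fun _ => 0) (by filter_upwards [hF0] with y hy; simp [hy])]
      simp
    simp only [hin]
    rw [ENNReal.zero_rpow_of_pos hr0, lintegral_zero, ENNReal.zero_rpow_of_pos (by positivity)]
    exact zero_le
  have hGne : IG ^ (1 / qq) ≠ 0 := by
    intro hzero
    rw [ENNReal.rpow_eq_zero_iff] at hzero
    rcases hzero with ⟨h0, _⟩ | ⟨_, hlt⟩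
    · exact hIG0 h0
    · have : (0:ℝ) < 1 / qq := by positivity
      linarith
  have hFne : IF ^ (1 / pp) ≠ 0 := by
    intro hzero
    rw [ENNReal.rpow_eq_zero_iff] at hzero
    rcases hzero with ⟨h0, _⟩ | ⟨_, hlt⟩
    · exact hIF0 h0
    · have : (0:ℝ) < 1 / pp := by positivity
      linarith
  by_cases hIFt : IF = ⊤
  · rw [hIFt, ENNReal.top_rpow_of_pos (by positivity), ENNReal.top_mul hGne]
    exact le_top
  by_cases hIGt : IG = ⊤
  · rw [hIGt, ENNReal.top_rpow_of_pos (by positivity), ENNReal.mul_top hFne]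
    exact le_top
  -- main case
  set K : E → ℝ≥0∞ := fun x => ∫⁻ y, F y ^ pp * G (x - y) ^ qq with hKdef
  -- pointwise Hölder
  have step1 : ∀ x : E, (∫⁻ y, F y * G (x - y)) ≤ K x ^ c1 * IF ^ c2 * IG ^ c3 := by
    intro x
    have hmeas : ∀ i ∈ (Finset.univ : Finset (Fin 3)),
        AEMeasurable ((![fun y => F y ^ pp * G (x - y) ^ qq,
          fun y => F y ^ pp, fun y => G (x - y) ^ qq] : Fin 3 → E → ℝ≥0∞) i) volume := by
      intro i _
      fin_cases i
      · exact ((hF.pow_const pp).mul ((hGm x).pow_const qq)).aemeasurable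
      · exact (hF.pow_const pp).aemeasurable
      · exact ((hGm x).pow_const qq).aemeasurable
    have h3 := ENNReal.lintegral_prod_norm_pow_le (μ := volume)
      (Finset.univ : Finset (Fin 3))
      (f := ![fun y => F y ^ pp * G (x - y) ^ qq, fun y => F y ^ pp, fun y => G (x - y) ^ qq])
      (p := ![c1, c2, c3]) hmeas
      (by simp [Fin.sum_univ_three, hsum])
      (by intro i _; fin_cases i <;> simp [hc1.le, hc2, hc3])
    simp only [Fin.prod_univ_three, Matrix.cons_val_zero, Matrix.cons_val_one, Matrix.head_cons,
      Matrix.cons_val_two, Matrix.tail_cons] at h3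
    have hpt : ∀ y : E, F y * G (x - y) =
        (F y ^ pp * G (x - y) ^ qq) ^ c1 * (F y ^ pp) ^ c2 * (G (x - y) ^ qq) ^ c3 := by
      intro y
      rw [ENNReal.mul_rpow_of_nonneg _ _ hc1.le]
      rw [← ENNReal.rpow_mul, ← ENNReal.rpow_mul, ← ENNReal.rpow_mul, ← ENNReal.rpow_mul]
      rw [mul_right_comm (F y ^ (pp * c1)) (G (x - y) ^ (qq * c1)) (F y ^ (pp * c2)),
        mul_assoc (F y ^ (pp * c1) * F y ^ (pp * c2)),
        ← ENNReal.rpow_add_of_nonneg _ _ (by positivity) (by positivity),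
        ← ENNReal.rpow_add_of_nonneg _ _ (by positivity) (by positivity)]
      have e1 : pp * c1 + pp * c2 = 1 := by
        simp only [hc1def, hc2def]; field_simp; ring
      have e2 : qq * c1 + qq * c3 = 1 := by
        simp only [hc1def, hc3def]; field_simp; ring
      rw [e1, e2, ENNReal.rpow_one, ENNReal.rpow_one]
    calc (∫⁻ y, F y * G (x - y))
        = ∫⁻ y, (F y ^ pp * G (x - y) ^ qq) ^ c1 * (F y ^ pp) ^ c2 * (G (x - y) ^ qq) ^ c3 := by
          exact lintegral_congr fun y => hpt y
      _ ≤ (∫⁻ y, F y ^ pp * G (x - y) ^ qq) ^ c1 * (∫⁻ y, F y ^ pp) ^ c2 *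
            (∫⁻ y, G (x - y) ^ qq) ^ c3 := h3
      _ = K x ^ c1 * IF ^ c2 * IG ^ c3 := by
          rw [lint_sub_left (fun z => G z ^ qq) (hG.pow_const qq) x]
  -- Fubini for K
  have hKint : ∫⁻ x, K x = IF * IG := by
    have hswap : ∫⁻ x, K x = ∫⁻ y, ∫⁻ x, F y ^ pp * G (x - y) ^ qq := by
      apply lintegral_lintegral_swap
      exact (((hF.comp measurable_snd).pow_const pp).mul
        ((hG.comp (measurable_fst.sub measurable_snd)).pow_const qq)).aemeasurable
    rw [hswap]
    have : ∀ y : E, ∫⁻ x, F y ^ pp * G (x - y) ^ qq = F y ^ pp * IG := by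
      intro y
      have hmg : Measurable fun x : E => G (x - y) ^ qq :=
        (hG.comp (measurable_id.sub measurable_const)).pow_const qq
      rw [lintegral_const_mul (F y ^ pp) hmg,
        lint_sub_right (fun z => G z ^ qq) (hG.pow_const qq) y]
    rw [lintegral_congr this, lintegral_mul_const' IG _ hIGt]
  have hCt : IF ^ (c2 * rr) * IG ^ (c3 * rr) ≠ ⊤ :=
    ENNReal.mul_ne_top (ENNReal.rpow_ne_top_of_nonneg (by positivity) hIFt)
      (ENNReal.rpow_ne_top_of_nonneg (by positivity) hIGt)
  have step2 : (∫⁻ x, (∫⁻ y, F y * G (x - y)) ^ rr) ≤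
      IF * IG * (IF ^ (c2 * rr) * IG ^ (c3 * rr)) := by
    calc (∫⁻ x, (∫⁻ y, F y * G (x - y)) ^ rr)
        ≤ ∫⁻ x, (K x ^ c1 * IF ^ c2 * IG ^ c3) ^ rr :=
          lintegral_mono fun x => ENNReal.rpow_le_rpow (step1 x) hr0.le
      _ = ∫⁻ x, K x * (IF ^ (c2 * rr) * IG ^ (c3 * rr)) := by
          apply lintegral_congr
          intro x
          rw [ENNReal.mul_rpow_of_nonneg _ _ hr0.le, ENNReal.mul_rpow_of_nonneg _ _ hr0.le,
            ← ENNReal.rpow_mul, ← ENNReal.rpow_mul, ← ENNReal.rpow_mul]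
          have : c1 * rr = 1 := by simp only [hc1def]; field_simp
          rw [this, ENNReal.rpow_one, mul_assoc]
      _ = (∫⁻ x, K x) * (IF ^ (c2 * rr) * IG ^ (c3 * rr)) := lintegral_mul_const' _ _ hCt
      _ = IF * IG * (IF ^ (c2 * rr) * IG ^ (c3 * rr)) := by rw [hKint]
  calc (∫⁻ x, (∫⁻ y, F y * G (x - y)) ^ rr) ^ (1 / rr)
      ≤ (IF * IG * (IF ^ (c2 * rr) * IG ^ (c3 * rr))) ^ (1 / rr) :=
        ENNReal.rpow_le_rpow step2 (by positivity)
    _ = IF ^ (1 / pp) * IG ^ (1 / qq) := by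
        rw [ENNReal.mul_rpow_of_nonneg _ _ (by positivity : (0:ℝ) ≤ 1/rr),
          ENNReal.mul_rpow_of_nonneg _ _ (by positivity : (0:ℝ) ≤ 1/rr),
          ENNReal.mul_rpow_of_nonneg _ _ (by positivity : (0:ℝ) ≤ 1/rr),
          ← ENNReal.rpow_mul, ← ENNReal.rpow_mul]
        have e2 : c2 * rr * (1 / rr) = c2 := by field_simp
        have e3 : c3 * rr * (1 / rr) = c3 := by field_simp
        rw [e2, e3, mul_mul_mul_comm,
          ← ENNReal.rpow_add_of_nonneg _ _ (by positivity) hc2,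
          ← ENNReal.rpow_add_of_nonneg _ _ (by positivity) hc3]
        have f2 : 1 / rr + c2 = 1 / pp := by simp only [hc2def]; ring
        have f3 : 1 / rr + c3 = 1 / qq := by simp only [hc3def]; ring
        rw [f2, f3]

/-- auxiliary "Lp norm" for `ℝ≥0∞`-valued functions. -/
noncomputable def lpn (F : E → ℝ≥0∞) (p : ℝ≥0∞) : ℝ≥0∞ :=
  if p = ∞ then essSup F volume else (∫⁻ x, F x ^ p.toReal) ^ (1 / p.toReal)

theorem lpn_mono {F G : E → ℝ≥0∞} (h : ∀ x, F x ≤ G x) (p : ℝ≥0∞) :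
    lpn F p ≤ lpn G p := by
  unfold lpn
  split_ifs with hp
  · exact essSup_mono_ae (Filter.Eventually.of_forall h)
  · exact ENNReal.rpow_le_rpow
      (lintegral_mono fun x => ENNReal.rpow_le_rpow (h x) ENNReal.toReal_nonneg)
      (by positivity)

theorem elpnorm_eq_lpn (u : (EuclideanSpace ℝ (Fin d)) → ℝ) {p : ℝ≥0∞} (hp : p ≠ 0) :
    eLpNorm u p volume = lpn (fun x => (‖u x‖₊ : ℝ≥0∞)) p := by
  unfold lpn
  split_ifs with h
  · rw [h, eLpNorm_exponent_top]
    rfl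
  · rw [eLpNorm_eq_lintegral_rpow_enorm_toReal hp h]; rfl

/-- Young's inequality, `r = ∞` case: pointwise Hölder bound. -/
theorem young_top (F G : E → ℝ≥0∞) (hF : Measurable F) (hG : Measurable G)
    (p q : ℝ≥0∞) (hp : 1 ≤ p) (hq : 1 ≤ q) (hpq : 1 / p + 1 / q = 1) (x : E) :
    (∫⁻ y, F y * G (x - y)) ≤ lpn F p * lpn G q := by
  have hGm : Measurable fun y => G (x - y) :=
    hG.comp (measurable_const.sub measurable_id)
  by_cases hptop : p = ∞
  · have hq1 : q = 1 := by
      rw [hptop] at hpq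
      simp only [one_div, ENNReal.inv_top, zero_add] at hpq
      exact ENNReal.inv_eq_one.mp hpq
    subst hq1; subst hptop
    have h1 : (∫⁻ y, F y * G (x - y)) ≤ ∫⁻ y, essSup F volume * G (x - y) := by
      apply lintegral_mono_ae
      filter_upwards [ENNReal.ae_le_essSup F] with y hy
      exact mul_le_mul_left hy _
    calc (∫⁻ y, F y * G (x - y)) ≤ ∫⁻ y, essSup F volume * G (x - y) := h1
      _ = essSup F volume * ∫⁻ y, G (x - y) := lintegral_const_mul _ hGm
      _ = essSup F volume * ∫⁻ y, G y := by rw [lint_sub_left G hG x]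
      _ = lpn F ⊤ * lpn G 1 := by
          unfold lpn
          simp [lintegral_congr fun y : E => ENNReal.rpow_one (G y)]
  by_cases hqtop : q = ∞
  · have hp1 : p = 1 := by
      rw [hqtop] at hpq
      simp only [one_div, ENNReal.inv_top, add_zero] at hpq
      exact ENNReal.inv_eq_one.mp hpq
    subst hp1; subst hqtop
    have h1 : (∫⁻ y, F y * G (x - y)) ≤ ∫⁻ y, F y * essSup G volume := by
      apply lintegral_mono_ae
      have hae : ∀ᵐ y : E ∂volume, G (x - y) ≤ essSup G volume :=
        (Measure.measurePreserving_sub_left volume x).quasiMeasurePreserving.ae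
          (ENNReal.ae_le_essSup G)
      filter_upwards [hae] with y hy
      exact mul_le_mul_right hy _
    calc (∫⁻ y, F y * G (x - y)) ≤ ∫⁻ y, F y * essSup G volume := h1
      _ = (∫⁻ y, F y) * essSup G volume := lintegral_mul_const _ hF
      _ = lpn F 1 * lpn G ⊤ := by
          unfold lpn
          simp [lintegral_congr fun y : E => ENNReal.rpow_one (F y)]
  · -- both finite, conjugate real exponents
    have hp0 : p ≠ 0 := by positivity
    have hq0 : q ≠ 0 := by positivity
    have hp1 : 1 < p := by
      rcases lt_or_eq_of_le hp with h | h
      · exact h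
      · exfalso
        rw [← h] at hpq
        simp only [one_div, inv_one] at hpq
        have : (1:ℝ≥0∞) + q⁻¹ = 1 + 0 := by simpa [add_comm] using hpq
        have h2 : q⁻¹ = 0 := by
          exact (ENNReal.add_right_inj (by norm_num)).mp this
        exact hqtop (ENNReal.inv_eq_zero.mp h2)
    have hpp1 : 1 < p.toReal := by
      rw [← ENNReal.toReal_one]
      exact ENNReal.toReal_lt_toReal (by norm_num) hptop |>.mpr hp1
    have hconj : p.toReal.HolderConjugate q.toReal := by
      rw [Real.holderConjugate_iff]
      constructor
      · exact hpp1
      · have := congrArg ENNReal.toReal hpq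
        rw [ENNReal.toReal_add (by simp [hp0] : 1/p ≠ ∞) (by simp [hq0] : 1/q ≠ ∞)] at this
        simpa [one_div, ENNReal.toReal_inv] using this
    have h1 := ENNReal.lintegral_mul_le_Lp_mul_Lq volume hconj hF.aemeasurable hGm.aemeasurable
    calc (∫⁻ y, F y * G (x - y)) ≤
        (∫⁻ y, F y ^ p.toReal) ^ (1 / p.toReal) * (∫⁻ y, G (x - y) ^ q.toReal) ^ (1 / q.toReal) :=
          h1
      _ = lpn F p * lpn G q := by
          rw [lint_sub_left (fun z => G z ^ q.toReal) (hG.pow_const _) x]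
          unfold lpn
          rw [if_neg hptop, if_neg hqtop]

/-- Young's inequality for `lpn`, all exponents in `[1,∞]`. -/
theorem young_lpn (F G : E → ℝ≥0∞) (hF : Measurable F) (hG : Measurable G)
    (r p q : ℝ≥0∞) (hr : 1 ≤ r) (hp : 1 ≤ p) (hq : 1 ≤ q)
    (hrpq : 1 / r + 1 = 1 / p + 1 / q) :
    lpn (fun x => ∫⁻ y, F y * G (x - y)) r ≤ lpn F p * lpn G q := by
  by_cases hrt : r = ∞
  · subst hrt
    have hpq : 1 / p + 1 / q = 1 := by
      rw [← hrpq]; simp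
    have hb := young_top F G hF hG p q hp hq hpq
    unfold lpn
    rw [if_pos rfl]
    exact essSup_le_of_ae_le _ (Filter.Eventually.of_forall hb)
  · -- r finite forces p, q finite
    have hr0 : r ≠ 0 := by positivity
    have hrinv : (0:ℝ≥0∞) < 1 / r := by
      simp only [one_div, ENNReal.inv_pos]
      exact hrt
    have hfin : ∀ s : ℝ≥0∞, 1 ≤ s → 1 / r + 1 = 1 / s → False := by
      intro s hs h
      have h1 : 1 / s ≤ 1 := by
        simp only [one_div]
        exact ENNReal.inv_le_one.mpr hs
      have : 1 / r + 1 ≤ 0 + 1 := by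
        rw [zero_add]; exact h ▸ h1
      have h2 : 1 / r ≤ 0 := by
        exact (ENNReal.add_le_add_iff_right (by norm_num)).mp this
      exact absurd h2 (not_le.mpr hrinv)
    have hpt : p ≠ ∞ := by
      intro hptop
      apply hfin q hq
      rw [hrpq, hptop]
      simp
    have hqt : q ≠ ∞ := by
      intro hqtop
      apply hfin p hp
      rw [hrpq, hqtop]
      simp [add_comm]
    have hp0 : p ≠ 0 := by positivity
    have hq0 : q ≠ 0 := by positivity
    have hrr : 1 ≤ r.toReal := by
      rw [← ENNReal.toReal_one]
      exact ENNReal.toReal_mono hrt hr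
    have hpp : 1 ≤ p.toReal := by
      rw [← ENNReal.toReal_one]
      exact ENNReal.toReal_mono hpt hp
    have hqq : 1 ≤ q.toReal := by
      rw [← ENNReal.toReal_one]
      exact ENNReal.toReal_mono hqt hq
    have hrel : 1 / r.toReal + 1 = 1 / p.toReal + 1 / q.toReal := by
      have := congrArg ENNReal.toReal hrpq
      rw [ENNReal.toReal_add (by simp [hr0] : 1/r ≠ ∞) (by norm_num),
        ENNReal.toReal_add (by simp [hp0] : 1/p ≠ ∞) (by simp [hq0] : 1/q ≠ ∞)] at this
      simpa [one_div, ENNReal.toReal_inv] using this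
    have := young_finite F G hF hG hrr hpp hqq hrel
    unfold lpn
    rw [if_neg hrt, if_neg hpt, if_neg hqt]
    exact this

/-- **Weighted Young inequality.** If `w` is `v`-moderate, then for exponents with
`1/r + 1 = 1/p + 1/q` one has `‖(|f| ⋆ |g|) w‖_{L^r} ≤ ‖f v‖_{L^p} ‖g w‖_{L^q}`. -/
theorem weighted_young_inequality
    (d : ℕ) (hd : 1 ≤ d)
    (v w : EuclideanSpace ℝ (Fin d) → ℝ)
    (hv : Measurable v) (hw : Measurable w)
    (hv0 : ∀ x, 0 ≤ v x) (hw0 : ∀ x, 0 ≤ w x)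
    (hmod : ∀ x y, w (x + y) ≤ v x * w y)
    (r p q : ℝ≥0∞) (hr : 1 ≤ r) (hp : 1 ≤ p) (hq : 1 ≤ q)
    (hrpq : 1 / r + 1 = 1 / p + 1 / q)
    (f g : EuclideanSpace ℝ (Fin d) → ℝ)
    (hf : Measurable f) (hg : Measurable g) :
    eLpNorm (fun x => (∫ y, |f y| * |g (x - y)|) * w x) r volume ≤
      eLpNorm (fun x => f x * v x) p volume * eLpNorm (fun x => g x * w x) q volume := by

  have hr0 : r ≠ 0 := (zero_lt_one.trans_le hr).ne'
  have hp0 : p ≠ 0 := (zero_lt_one.trans_le hp).ne'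
  have hq0 : q ≠ 0 := (zero_lt_one.trans_le hq).ne'
  rw [elpnorm_eq_lpn _ hr0, elpnorm_eq_lpn _ hp0, elpnorm_eq_lpn _ hq0]
  set F : EuclideanSpace ℝ (Fin d) → ℝ≥0∞ := fun x => (‖f x * v x‖₊ : ℝ≥0∞) with hFdef
  set G : EuclideanSpace ℝ (Fin d) → ℝ≥0∞ := fun x => (‖g x * w x‖₊ : ℝ≥0∞) with hGdef
  have hF : Measurable F := (hf.mul hv).nnnorm.coe_nnreal_ennreal
  have hG : Measurable G := (hg.mul hw).nnnorm.coe_nnreal_ennreal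
  have key : ∀ x : EuclideanSpace ℝ (Fin d), (‖(∫ y, |f y| * |g (x - y)|) * w x‖₊ : ℝ≥0∞) ≤
      ∫⁻ y, F y * G (x - y) := by
    intro x
    rw [nnnorm_mul, ENNReal.coe_mul]
    calc (‖(∫ y, |f y| * |g (x - y)|)‖₊ : ℝ≥0∞) * (‖w x‖₊ : ℝ≥0∞)
        ≤ (∫⁻ y, (‖|f y| * |g (x - y)|‖₊ : ℝ≥0∞)) * (‖w x‖₊ : ℝ≥0∞) :=
          mul_le_mul_left (enorm_integral_le_lintegral_enorm _) _
      _ = ∫⁻ y, (‖|f y| * |g (x - y)|‖₊ : ℝ≥0∞) * (‖w x‖₊ : ℝ≥0∞) :=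
          (lintegral_mul_const' _ _ ENNReal.coe_ne_top).symm
      _ ≤ ∫⁻ y, F y * G (x - y) := by
          apply lintegral_mono
          intro y
          have e1 : (‖|f y| * |g (x - y)|‖₊ : ℝ≥0∞) =
              ENNReal.ofReal |f y| * ENNReal.ofReal |g (x - y)| := by
            rw [← enorm_eq_nnnorm, Real.enorm_eq_ofReal (by positivity), ENNReal.ofReal_mul (abs_nonneg _)]
          have e2 : (‖w x‖₊ : ℝ≥0∞) = ENNReal.ofReal (w x) := Real.enorm_eq_ofReal (hw0 x)
          have e3 : F y = ENNReal.ofReal |f y| * ENNReal.ofReal (v y) := by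
            simp only [hFdef]
            rw [← enorm_eq_nnnorm, Real.enorm_eq_ofReal_abs, abs_mul, abs_of_nonneg (hv0 y),
              ENNReal.ofReal_mul (abs_nonneg _)]
          have e4 : G (x - y) = ENNReal.ofReal |g (x - y)| * ENNReal.ofReal (w (x - y)) := by
            simp only [hGdef]
            rw [← enorm_eq_nnnorm, Real.enorm_eq_ofReal_abs, abs_mul, abs_of_nonneg (hw0 (x - y)),
              ENNReal.ofReal_mul (abs_nonneg _)]
          show (‖|f y| * |g (x - y)|‖₊ : ℝ≥0∞) * (‖w x‖₊ : ℝ≥0∞) ≤ F y * G (x - y)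
          rw [e1, e2, e3, e4]
          have hwle : ENNReal.ofReal (w x) ≤ ENNReal.ofReal (v y) * ENNReal.ofReal (w (x - y)) := by
            rw [← ENNReal.ofReal_mul (hv0 y)]
            apply ENNReal.ofReal_le_ofReal
            have h := hmod y (x - y)
            rwa [add_sub_cancel] at h
          calc ENNReal.ofReal |f y| * ENNReal.ofReal |g (x - y)| * ENNReal.ofReal (w x)
              ≤ ENNReal.ofReal |f y| * ENNReal.ofReal |g (x - y)| *
                  (ENNReal.ofReal (v y) * ENNReal.ofReal (w (x - y))) :=
                mul_le_mul_right hwle _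
            _ = ENNReal.ofReal |f y| * ENNReal.ofReal (v y) *
                  (ENNReal.ofReal |g (x - y)| * ENNReal.ofReal (w (x - y))) := by ring
  calc lpn (fun x => (‖(∫ y, |f y| * |g (x - y)|) * w x‖₊ : ℝ≥0∞)) r
      ≤ lpn (fun x => ∫⁻ y, F y * G (x - y)) r := lpn_mono key r
    _ ≤ lpn F p * lpn G q := young_lpn F G hF hG r p q hr hp hq hrpq
end

section
/- (Bounds on the heat-kernel covariance.) For M ∈ [1,∞), t₁, t₂ ≥ 0 and x ∈ ℝ², define 𝒦_M(t₁,t₂;x) = (1/(8π)) ∫_{|t₁−t₂|}^{t₁+t₂} ℓ^{−1} Σ_{y ∈ Mℤ²} exp(−|x−y|²/(4ℓ)) dℓ, and let |x|_M = inf{|x+y| : y ∈ Mℤ²}. Then: (i) for every T > 0 there exists C(T) < ∞ such that uniformly over x ∈ ℝ², 0 ≤ t₁, t₂ ≤ T and M ∈ [1,∞), 𝒦_M(t₁,t₂;x) ≤ C(T)·(1 + log₊(|x|_M^{−1})); (ii) for every T > 0 and every λ ∈ (0,1] there exists C(T,λ) < ∞ such that uniformly over x ∈ ℝ², 0 ≤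 t₁, t₂ ≤ T and M ∈ [1,∞), |𝒦_M(t₁,t₁;x) − 𝒦_M(t₁,t₂;x)| ≤ C(T,λ)·|t₁−t₂|^λ / |x|_M^{2λ}. Here log₊(u) = max(log u, 0). -/
open MeasureTheory
open scoped ENNReal

noncomputable section

/-- A point of the lattice `Mℤ²`. -/
def latticePt (M : ℝ) (m : Fin 2 → ℤ) : EuclideanSpace ℝ (Fin 2) :=
  (WithLp.equiv 2 (Fin 2 → ℝ)).symm fun i => M * (m i : ℝ)

/-- The lattice `Mℤ² ⊆ ℝ²`. -/
def lattice (M : ℝ) : Set (EuclideanSpace ℝ (Fin 2)) := Set.range (latticePt M)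

/-- `|x|_M = inf {|x + y| : y ∈ Mℤ²}`, the distance from `x` to the lattice. -/
def latticeDist (M : ℝ) (x : EuclideanSpace ℝ (Fin 2)) : ℝ :=
  Metric.infDist x (lattice M)

/-- The periodised heat-kernel covariance
`𝒦_M(t₁,t₂;x) = (8π)⁻¹ ∫_{|t₁-t₂|}^{t₁+t₂} ℓ⁻¹ Σ_{y ∈ Mℤ²} exp(-|x-y|²/(4ℓ)) dℓ`. -/
def covKernel (M : ℝ) (t₁ t₂ : ℝ) (x : EuclideanSpace ℝ (Fin 2)) : ℝ :=
  (8 * Real.pi)⁻¹ *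
    ∫ l in |t₁ - t₂|..(t₁ + t₂),
      l⁻¹ * ∑' m : Fin 2 → ℤ, Real.exp (-‖x - latticePt M m‖ ^ 2 / (4 * l))

/-- `log₊(u⁻¹)` as an extended nonnegative real (equal to `∞` when `u = 0`). -/
def logPlusInv (u : ℝ) : ℝ≥0∞ :=
  if u = 0 then ⊤ else ENNReal.ofReal (max (Real.log u⁻¹) 0)

namespace CovAux

open intervalIntegral

/-! ### Elementary lattice lemmas -/

def q (m : Fin 2 → ℤ) : ℝ := (m 0 : ℝ)^2 + (m 1 : ℝ)^2

lemma q_nonneg (m : Fin 2 → ℤ) : 0 ≤ q m := by unfold q; positivity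

lemma latticePt_apply (M : ℝ) (m : Fin 2 → ℤ) (i : Fin 2) :
    latticePt M m i = M * (m i : ℝ) := rfl

lemma latticePt_add (M : ℝ) (k m : Fin 2 → ℤ) :
    latticePt M (k + m) = latticePt M k + latticePt M m := by
  ext i
  simp [latticePt_apply, PiLp.add_apply]
  ring

lemma latticePt_neg (M : ℝ) (k : Fin 2 → ℤ) : latticePt M (-k) = - latticePt M k := by
  ext i
  simp [latticePt_apply, PiLp.neg_apply]

lemma lattice_nonempty (M : ℝ) : (lattice M).Nonempty := ⟨latticePt M 0, Set.mem_range_self _⟩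

lemma latticeDist_le (M : ℝ) (x : EuclideanSpace ℝ (Fin 2)) (m : Fin 2 → ℤ) :
    latticeDist M x ≤ ‖x - latticePt M m‖ := by
  rw [← dist_eq_norm]
  exact Metric.infDist_le_dist_of_mem (Set.mem_range_self _)

lemma latticeDist_nonneg (M : ℝ) (x : EuclideanSpace ℝ (Fin 2)) :
    0 ≤ latticeDist M x := Metric.infDist_nonneg

lemma latticeDist_add_le (M : ℝ) (x : EuclideanSpace ℝ (Fin 2)) (k : Fin 2 → ℤ) :
    latticeDist M (x + latticePt M k) ≤ latticeDist M x := by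
  rw [latticeDist, latticeDist, Metric.infDist, Metric.infDist]
  apply ENNReal.toReal_mono (Metric.infEdist_ne_top (lattice_nonempty M))
  rw [Metric.infEDist]
  apply le_iInf₂
  rintro y ⟨m, rfl⟩
  have : edist x (latticePt M m) = edist (x + latticePt M k) (latticePt M (m + k)) := by
    rw [latticePt_add, edist_add_right]
  rw [this]
  exact EMetric.infEdist_le_edist_of_mem (Set.mem_range_self _)

lemma latticeDist_sub_eq (M : ℝ) (x : EuclideanSpace ℝ (Fin 2)) (k : Fin 2 → ℤ) :
    latticeDist M (x - latticePt M k) = latticeDist M x := by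
  apply le_antisymm
  · have := latticeDist_add_le M x (-k)
    rwa [latticePt_neg, ← sub_eq_add_neg] at this
  · have := latticeDist_add_le M (x - latticePt M k) k
    rwa [sub_add_cancel] at this

lemma tsum_shift (M : ℝ) (x : EuclideanSpace ℝ (Fin 2)) (k : Fin 2 → ℤ) (l : ℝ) :
    (∑' m : Fin 2 → ℤ, Real.exp (-‖(x - latticePt M k) - latticePt M m‖ ^ 2 / (4 * l)))
      = ∑' m : Fin 2 → ℤ, Real.exp (-‖x - latticePt M m‖ ^ 2 / (4 * l)) := by
  have h := Equiv.tsum_eq (Equiv.addLeft k)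
    (fun m => Real.exp (-‖x - latticePt M m‖ ^ 2 / (4 * l)))
  rw [← h]
  apply tsum_congr
  intro m
  congr 2
  rw [Equiv.coe_addLeft, latticePt_add, sub_sub]

lemma covKernel_shift (M : ℝ) (t₁ t₂ : ℝ) (x : EuclideanSpace ℝ (Fin 2)) (k : Fin 2 → ℤ) :
    covKernel M t₁ t₂ (x - latticePt M k) = covKernel M t₁ t₂ x := by
  unfold covKernel
  congr 1
  apply intervalIntegral.integral_congr
  intro l _
  simp only []
  rw [tsum_shift M x k l]

lemma norm_sq_eq (y : EuclideanSpace ℝ (Fin 2)) : ‖y‖^2 = (y 0)^2 + (y 1)^2 := by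
  rw [EuclideanSpace.norm_eq, Real.sq_sqrt (by positivity)]
  simp [Fin.sum_univ_two, sq_abs]

lemma q_le_norm_sq {M : ℝ} (hM : 1 ≤ M) {x : EuclideanSpace ℝ (Fin 2)}
    (hx : ∀ i, |x i| ≤ M / 2) (m : Fin 2 → ℤ) :
    q m ≤ 4 * ‖x - latticePt M m‖^2 := by
  have hM0 : (0:ℝ) < M := lt_of_lt_of_le one_pos hM
  have key : ∀ i : Fin 2, (m i : ℝ)^2 ≤ 4 * (x i - M * m i)^2 := by
    intro i
    rcases eq_or_ne (m i) 0 with h | h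
    · simp [h]; positivity
    · have h1 : (1:ℝ) ≤ |(m i : ℝ)| := by
        rw [← Int.cast_abs]; exact_mod_cast Int.one_le_abs h
      have h2 : M * |(m i : ℝ)| / 2 ≤ |x i - M * m i| := by
        have : M * |(m i : ℝ)| - M/2 ≤ |M * m i| - |x i| := by
          rw [abs_mul, abs_of_pos hM0]
          have := hx i; linarith
        have h3 : |M * (m i:ℝ)| - |x i| ≤ |x i - M * m i| := by
          rw [abs_sub_comm]; exact abs_sub_abs_le_abs_sub _ _
        nlinarith [abs_nonneg ((m i : ℝ))]
      have h4 : M * |(m i : ℝ)| / 2 ≥ |(m i:ℝ)| / 2 := by nlinarith [abs_nonneg ((m i:ℝ))]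
      nlinarith [abs_nonneg (x i - M * m i), sq_abs (x i - M * m i), sq_abs ((m i:ℝ))]
  have k0 := key 0; have k1 := key 1
  rw [norm_sq_eq]
  simp only [PiLp.sub_apply, latticePt_apply]
  unfold q; linarith

/-! ### Summability -/

lemma summable_int_exp {c : ℝ} (hc : 0 < c) :
    Summable fun k : ℤ => Real.exp (-(c * (k:ℝ)^2)) := by
  have hnat : Summable fun n : ℕ => Real.exp (-(c * (n:ℝ)^2)) := by
    have hg : Summable fun n : ℕ => Real.exp (-c) ^ n := by
      apply summable_geometric_of_lt_one (le_of_lt (Real.exp_pos _))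
      rw [Real.exp_lt_one_iff]; linarith
    apply Summable.of_nonneg_of_le (fun n => (Real.exp_pos _).le) _ hg
    intro n
    rw [← Real.exp_nat_mul]
    apply Real.exp_le_exp.2
    have : (n:ℝ) ≤ (n:ℝ)^2 := by
      exact_mod_cast Nat.le_self_pow two_ne_zero n
    nlinarith
  apply Summable.of_nat_of_neg <;> simpa using hnat

lemma summable_exp_neg_q {c : ℝ} (hc : 0 < c) :
    Summable fun m : Fin 2 → ℤ => Real.exp (-(c * q m)) := by
  have h2 : Summable fun p : ℤ × ℤ =>
      Real.exp (-(c * (p.1:ℝ)^2)) * Real.exp (-(c * (p.2:ℝ)^2)) :=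
    (summable_int_exp hc).mul_of_nonneg (summable_int_exp hc)
      (fun k => (Real.exp_pos _).le) (fun k => (Real.exp_pos _).le)
  have h3 := h2.comp_injective (piFinTwoEquiv fun _ => ℤ).injective
  apply h3.congr
  intro m
  simp [q, ← Real.exp_add]
  ring_nf

/-! ### Measurability of the theta sum -/

lemma measurable_tsum_exp {ι : Type*} [Countable ι] (c : ι → ℝ) :
    Measurable fun l : ℝ => ∑' m : ι, Real.exp (-c m / (4 * l)) := by
  have hterm : ∀ l : ℝ, ∀ m : ι, 0 ≤ Real.exp (-c m / (4 * l)) :=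
    fun l m => (Real.exp_pos _).le
  have key : ∀ l : ℝ, (∑' m : ι, Real.exp (-c m / (4 * l))) =
      (∑' m : ι, ENNReal.ofReal (Real.exp (-c m / (4 * l)))).toReal := by
    intro l
    by_cases hs : Summable fun m : ι => Real.exp (-c m / (4 * l))
    · rw [← ENNReal.ofReal_tsum_of_nonneg (hterm l) hs,
        ENNReal.toReal_ofReal (tsum_nonneg (hterm l))]
    · rw [tsum_eq_zero_of_not_summable hs]
      symm
      rw [ENNReal.toReal_eq_zero_iff]
      right
      by_contra htop
      apply hs
      have h := ENNReal.summable_toReal htop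
      apply h.congr
      intro m
      rw [ENNReal.toReal_ofReal (hterm l m)]
  simp_rw [key]
  apply Measurable.ennreal_toReal
  apply Measurable.ennreal_tsum
  intro m
  apply Measurable.ennreal_ofReal
  apply Measurable.exp
  exact measurable_const.div (measurable_id'.const_mul 4)

/-! ### The auxiliary function `hfun` -/

def hfun (α : ℝ) (l : ℝ) : ℝ := l⁻¹ * Real.exp (-α / l)

lemma hfun_nonneg {α : ℝ} {l : ℝ} (hl : 0 ≤ l) : 0 ≤ hfun α l := by
  unfold hfun; positivity

lemma hfun_le_inv {α : ℝ} (hα : 0 < α) {l : ℝ} (hl : 0 ≤ l) : hfun α l ≤ α⁻¹ := by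
  rcases eq_or_lt_of_le hl with h | h
  · simp [hfun, ← h]; positivity
  · have hu : 0 < α / l := by positivity
    have h1 : Real.exp (-(α/l)) ≤ (α/l)⁻¹ := by
      rw [Real.exp_neg]
      apply inv_anti₀ hu
      linarith [Real.add_one_le_exp (α/l)]
    have hle : hfun α l ≤ l⁻¹ * (α/l)⁻¹ := by
      unfold hfun
      rw [neg_div]
      exact mul_le_mul_of_nonneg_left h1 (by positivity)
    calc hfun α l ≤ l⁻¹ * (α/l)⁻¹ := hle
    _ = α⁻¹ := by field_simp

lemma hfun_measurable (α : ℝ) : Measurable (hfun α) := by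
  unfold hfun
  exact measurable_inv.mul (Real.measurable_exp.comp (measurable_const.div measurable_id'))

lemma intervalIntegrable_of_bdd {f : ℝ → ℝ} {C a b : ℝ} (hf : Measurable f)
    (h : ∀ l ∈ Set.uIoc a b, |f l| ≤ C) : IntervalIntegrable f volume a b := by
  rw [intervalIntegrable_iff]
  have hfin : volume (Set.uIoc a b) < ⊤ := measure_Ioc_lt_top
  apply Integrable.mono' (integrableOn_const (C := C) hfin.ne)
  · exact hf.aestronglyMeasurable
  · exact (ae_restrict_iff' measurableSet_uIoc).2 (ae_of_all _ fun l hl => by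
      simpa [Real.norm_eq_abs] using h l hl)

lemma hfun_integrable (α : ℝ) (hα : 0 < α) (a b : ℝ) (ha : 0 ≤ a) (hb : 0 ≤ b) :
    IntervalIntegrable (hfun α) volume a b := by
  apply intervalIntegrable_of_bdd (hfun_measurable α) (C := α⁻¹)
  intro l hl
  have hl0 : 0 < l := lt_of_le_of_lt (le_min ha hb) hl.1
  rw [abs_of_nonneg (hfun_nonneg hl0.le)]
  exact hfun_le_inv hα hl0.le

/-- The key integral estimate: `∫_0^b l⁻¹ e^{-α/l} dl ≤ 1 + log₊(b/α)`. -/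
lemma integral_hfun_le {α b : ℝ} (hα : 0 < α) (hb : 0 ≤ b) :
    ∫ l in (0:ℝ)..b, hfun α l ≤ 1 + max (Real.log (b / α)) 0 := by
  rcases eq_or_lt_of_le hb with h | hb0
  · rw [← h, integral_same]; positivity
  set c := min α b with hc
  have hc0 : 0 < c := lt_min hα hb0
  have hcb : c ≤ b := min_le_right _ _
  have hsplit : ∫ l in (0:ℝ)..b, hfun α l
      = (∫ l in (0:ℝ)..c, hfun α l) + ∫ l in c..b, hfun α l := by
    rw [integral_add_adjacent_intervals (hfun_integrable α hα 0 c le_rfl hc0.le)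
      (hfun_integrable α hα c b hc0.le hb)]
  have h1 : ∫ l in (0:ℝ)..c, hfun α l ≤ 1 := by
    have hle : ∫ l in (0:ℝ)..c, hfun α l ≤ ∫ _ in (0:ℝ)..c, α⁻¹ := by
      apply integral_mono_on hc0.le (hfun_integrable α hα 0 c le_rfl hc0.le)
        intervalIntegrable_const
      exact fun l hl => hfun_le_inv hα hl.1
    rw [intervalIntegral.integral_const, smul_eq_mul, sub_zero] at hle
    calc ∫ l in (0:ℝ)..c, hfun α l ≤ c * α⁻¹ := hle
    _ ≤ α * α⁻¹ := by
        apply mul_le_mul_of_nonneg_right (min_le_left _ _) (by positivity)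
    _ = 1 := by field_simp
  have h2 : ∫ l in c..b, hfun α l ≤ max (Real.log (b / α)) 0 := by
    have hle : ∫ l in c..b, hfun α l ≤ ∫ l in c..b, l⁻¹ := by
      apply integral_mono_on hcb (hfun_integrable α hα c b hc0.le hb)
      · apply intervalIntegrable_inv
        · intro l hl
          have := hl.1
          rw [min_eq_left hcb] at this
          exact ne_of_gt (lt_of_lt_of_le hc0 this)
        · exact continuousOn_id
      · intro l hl
        have hl0 : 0 < l := lt_of_lt_of_le hc0 hl.1
        unfold hfun
        apply mul_le_of_le_one_right (by positivity)
        apply Real.exp_le_one_iff.2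
        rw [neg_div, neg_nonpos]
        positivity
    rw [integral_inv_of_pos hc0 hb0] at hle
    apply le_trans hle
    rcases le_total α b with h | h
    · rw [hc, min_eq_left h]; exact le_max_left _ _
    · rw [hc, min_eq_right h]
      simp [div_self (ne_of_gt hb0)]
  linarith [hsplit, h1, h2]

/-- rpow bound on hfun, for part (ii). -/
lemma hfun_le_rpow {α lam : ℝ} (hα : 0 < α) (hlam0 : 0 < lam) (hlam1 : lam ≤ 1)
    {l : ℝ} (hl : 0 < l) : hfun α l ≤ l ^ (lam - 1) / α ^ lam := by
  have hu : 0 < α / l := by positivity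
  have he1 : Real.exp (-(α/l)) ≤ Real.exp (-(α/l)) ^ lam := by
    have h0 : 0 < Real.exp (-(α/l)) := Real.exp_pos _
    have h1 : Real.exp (-(α/l)) ≤ 1 := Real.exp_le_one_iff.2 (by linarith)
    calc Real.exp (-(α/l)) = Real.exp (-(α/l)) ^ (1:ℝ) := (Real.rpow_one _).symm
    _ ≤ Real.exp (-(α/l)) ^ lam := Real.rpow_le_rpow_of_exponent_ge h0 h1 hlam1
  have he2 : Real.exp (-(α/l)) ≤ (α/l)⁻¹ := by
    rw [Real.exp_neg]
    apply inv_anti₀ hu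
    linarith [Real.add_one_le_exp (α/l)]
  have he3 : Real.exp (-(α/l)) ^ lam ≤ ((α/l)⁻¹) ^ lam :=
    Real.rpow_le_rpow (Real.exp_pos _).le he2 hlam0.le
  have he4 : ((α/l)⁻¹ : ℝ) ^ lam = l ^ lam / α ^ lam := by
    rw [inv_div, Real.div_rpow hl.le hα.le]
  have hchain : Real.exp (-(α/l)) ≤ l ^ lam / α ^ lam := by
    rw [← he4]; exact le_trans he1 he3
  have : hfun α l ≤ l⁻¹ * (l ^ lam / α ^ lam) := by
    unfold hfun
    rw [neg_div]
    exact mul_le_mul_of_nonneg_left hchain (by positivity)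
  apply le_trans this
  rw [div_eq_mul_inv, div_eq_mul_inv, ← mul_assoc]
  apply mul_le_mul_of_nonneg_right _ (by positivity)
  rw [show lam - 1 = -1 + lam by ring, Real.rpow_add hl, Real.rpow_neg_one]

lemma rpow_sub_le {u v lam : ℝ} (hu : 0 ≤ u) (huv : u ≤ v) (h0 : 0 ≤ lam) (h1 : lam ≤ 1) :
    v ^ lam - u ^ lam ≤ (v - u) ^ lam := by
  have h := NNReal.rpow_add_le_add_rpow (Real.toNNReal u) (Real.toNNReal (v - u)) h0 h1
  have hsum : Real.toNNReal u + Real.toNNReal (v - u) = Real.toNNReal v := by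
    rw [← Real.toNNReal_add hu (by linarith)]
    congr 1; ring
  rw [hsum] at h
  have hcast := (NNReal.coe_le_coe).2 h
  push_cast [NNReal.coe_rpow, Real.coe_toNNReal _ hu, Real.coe_toNNReal _ (le_trans hu huv),
    Real.coe_toNNReal _ (by linarith : (0:ℝ) ≤ v - u)] at hcast
  linarith


/-! ### Core estimates in the fundamental domain -/

def Sfun (M : ℝ) (x : EuclideanSpace ℝ (Fin 2)) (l : ℝ) : ℝ :=
  ∑' m : Fin 2 → ℤ, Real.exp (-‖x - latticePt M m‖ ^ 2 / (4 * l))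

lemma Sfun_nonneg (M : ℝ) (x : EuclideanSpace ℝ (Fin 2)) (l : ℝ) : 0 ≤ Sfun M x l :=
  tsum_nonneg fun m => (Real.exp_pos _).le

lemma Sfun_measurable (M : ℝ) (x : EuclideanSpace ℝ (Fin 2)) : Measurable (Sfun M x) :=
  measurable_tsum_exp fun m => ‖x - latticePt M m‖ ^ 2

section Core

variable {M T : ℝ} {x : EuclideanSpace ℝ (Fin 2)}

/-- The constant `C_T = Σ_m exp(-q(m)/(64T))`. -/
def CT (T : ℝ) : ℝ := ∑' m : Fin 2 → ℤ, Real.exp (-(q m) / (64 * T))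

lemma summable_CT (hT : 0 < T) :
    Summable fun m : Fin 2 → ℤ => Real.exp (-(q m) / (64 * T)) := by
  have := summable_exp_neg_q (c := (64 * T)⁻¹) (by positivity)
  apply this.congr
  intro m
  congr 1
  field_simp

lemma one_le_CT (hT : 0 < T) : 1 ≤ CT T := by
  have h := Summable.le_tsum (summable_CT hT) (fun _ => (0:ℤ))
    (fun m _ => (Real.exp_pos _).le)
  have h0 : Real.exp (-(q (fun _ => (0:ℤ))) / (64 * T)) = 1 := by
    simp [q]
  rw [h0] at h
  exact h

/-- Per-term exponential bound. -/
lemma term_le (hM : 1 ≤ M) (hT : 0 < T) (hx : ∀ i, |x i| ≤ M / 2)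
    {l : ℝ} (hl : l ∈ Set.Ioc (0:ℝ) (2 * T)) (m : Fin 2 → ℤ) :
    Real.exp (-‖x - latticePt M m‖ ^ 2 / (4 * l)) ≤
      Real.exp (-(latticeDist M x ^ 2 / 8) / l) * Real.exp (-(q m) / (64 * T)) := by
  set d := latticeDist M x with hd
  have hl0 : 0 < l := hl.1
  have hl2T : l ≤ 2 * T := hl.2
  have hb1 : d ^ 2 ≤ ‖x - latticePt M m‖ ^ 2 := by
    apply sq_le_sq' _ (latticeDist_le M x m)
    have := latticeDist_nonneg M x
    have := norm_nonneg (x - latticePt M m)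
    linarith
  have hb2 := q_le_norm_sq hM hx m
  have hqn := q_nonneg m
  rw [← Real.exp_add]
  apply Real.exp_le_exp.2
  have hdiv : q m / (64 * T) ≤ q m / (32 * l) := by
    apply div_le_div_of_nonneg_left hqn (by positivity) (by linarith)
  have hkey : d ^ 2 / (8 * l) + q m / (32 * l) ≤ ‖x - latticePt M m‖ ^ 2 / (4 * l) := by
    rw [div_add_div _ _ (by positivity : (8:ℝ) * l ≠ 0) (by positivity : (32:ℝ) * l ≠ 0)]
    rw [div_le_div_iff₀ (by positivity) (by positivity)]
    nlinarith [mul_le_mul_of_nonneg_right hb1 (le_of_lt (mul_pos hl0 hl0)),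
      mul_le_mul_of_nonneg_right hb2 (le_of_lt (mul_pos hl0 hl0))]
  have : -(d ^ 2 / 8) / l = -(d ^ 2 / (8 * l)) := by
    rw [neg_div, div_div]
  rw [this, neg_div, neg_div, ← neg_add]
  apply neg_le_neg
  linarith

lemma Sfun_summand_summable (hM : 1 ≤ M) (hT : 0 < T) (hx : ∀ i, |x i| ≤ M / 2)
    {l : ℝ} (hl : l ∈ Set.Ioc (0:ℝ) (2 * T)) :
    Summable fun m : Fin 2 → ℤ => Real.exp (-‖x - latticePt M m‖ ^ 2 / (4 * l)) := by
  apply Summable.of_nonneg_of_le (fun m => (Real.exp_pos _).le) (term_le hM hT hx hl)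
  exact (summable_CT hT).mul_left _

/-- The theta-sum bound `S(l) ≤ C_T e^{-d²/(8l)}`. -/
lemma Sfun_le (hM : 1 ≤ M) (hT : 0 < T) (hx : ∀ i, |x i| ≤ M / 2)
    {l : ℝ} (hl : l ∈ Set.Ioc (0:ℝ) (2 * T)) :
    Sfun M x l ≤ Real.exp (-(latticeDist M x ^ 2 / 8) / l) * CT T := by
  have h1 : Sfun M x l ≤
      ∑' m : Fin 2 → ℤ, Real.exp (-(latticeDist M x ^ 2 / 8) / l) * Real.exp (-(q m) / (64 * T)) :=
    Summable.tsum_le_tsum (term_le hM hT hx hl) (Sfun_summand_summable hM hT hx hl)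
      ((summable_CT hT).mul_left _)
  rwa [tsum_mul_left] at h1

/-- `f(l) = l⁻¹ S(l)`: pointwise bound by `hfun`. -/
lemma f_le_hfun (hM : 1 ≤ M) (hT : 0 < T) (hx : ∀ i, |x i| ≤ M / 2)
    {l : ℝ} (hl : l ∈ Set.Ioc (0:ℝ) (2 * T)) :
    l⁻¹ * Sfun M x l ≤ CT T * hfun (latticeDist M x ^ 2 / 8) l := by
  have hl0 : 0 < l := hl.1
  have h1 := Sfun_le hM hT hx hl
  have h2 : l⁻¹ * Sfun M x l ≤ l⁻¹ * (Real.exp (-(latticeDist M x ^ 2 / 8) / l) * CT T) :=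
    mul_le_mul_of_nonneg_left h1 (by positivity)
  apply le_trans h2
  unfold hfun
  ring_nf
  exact le_refl _

lemma f_nonneg (M : ℝ) (x : EuclideanSpace ℝ (Fin 2)) {l : ℝ} (hl : 0 ≤ l) :
    0 ≤ l⁻¹ * Sfun M x l :=
  mul_nonneg (by positivity) (Sfun_nonneg M x l)

lemma f_zero (M : ℝ) (x : EuclideanSpace ℝ (Fin 2)) : (0:ℝ)⁻¹ * Sfun M x 0 = 0 := by
  simp

/-- Interval integrability of `f` on subintervals of `[0, 2T]`, when `d > 0`. -/
lemma f_integrable (hM : 1 ≤ M) (hT : 0 < T) (hx : ∀ i, |x i| ≤ M / 2)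
    (hd : 0 < latticeDist M x) {a b : ℝ} (ha : 0 ≤ a) (ha' : a ≤ 2 * T)
    (hb : 0 ≤ b) (hb' : b ≤ 2 * T) :
    IntervalIntegrable (fun l => l⁻¹ * Sfun M x l) volume a b := by
  set d := latticeDist M x with hdd
  apply intervalIntegrable_of_bdd (C := CT T * (d ^ 2 / 8)⁻¹)
    (measurable_inv.mul (Sfun_measurable M x))
  intro l hl
  have hl0 : 0 < l := lt_of_le_of_lt (le_min ha hb) hl.1
  have hl2T : l ≤ 2 * T := le_trans hl.2 (max_le ha' hb')
  show |l⁻¹ * Sfun M x l| ≤ _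
  rw [abs_of_nonneg (f_nonneg M x hl0.le)]
  calc l⁻¹ * Sfun M x l ≤ CT T * hfun (d ^ 2 / 8) l := f_le_hfun hM hT hx ⟨hl0, hl2T⟩
  _ ≤ CT T * (d ^ 2 / 8)⁻¹ := by
      apply mul_le_mul_of_nonneg_left (hfun_le_inv (by positivity) hl0.le)
      linarith [one_le_CT hT]

end Core

/-- Core estimate for part (i). -/
lemma partI_core {M T : ℝ} {x : EuclideanSpace ℝ (Fin 2)}
    (hM : 1 ≤ M) (hT : 0 < T) (hx : ∀ i, |x i| ≤ M / 2)
    (hd : 0 < latticeDist M x) {a b : ℝ} (ha : 0 ≤ a) (hab : a ≤ b) (hb' : b ≤ 2 * T) :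
    ∫ l in a..b, l⁻¹ * Sfun M x l ≤
      CT T * (1 + max (Real.log (b / (latticeDist M x ^ 2 / 8))) 0) := by
  set d := latticeDist M x with hdd
  set α := d ^ 2 / 8 with hα
  have hα0 : 0 < α := by positivity
  have hb0 : 0 ≤ b := le_trans ha hab
  have ha' : a ≤ 2 * T := le_trans hab hb'
  have hint_f := f_integrable hM hT hx hd ha ha' hb0 hb'
  have hint_h := hfun_integrable α hα0 a b ha hb0
  have step1 : ∫ l in a..b, l⁻¹ * Sfun M x l ≤ ∫ l in a..b, CT T * hfun α l := by
    apply intervalIntegral.integral_mono_on hab hint_f (hint_h.const_mul _)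
    intro l hl
    rcases eq_or_lt_of_le (le_trans ha hl.1) with h | h
    · rw [← h, f_zero]
      have : hfun α 0 = 0 := by simp [hfun]
      rw [this, mul_zero]
    · exact f_le_hfun hM hT hx ⟨h, le_trans hl.2 hb'⟩
  have step2 : ∫ l in a..b, CT T * hfun α l = CT T * ∫ l in a..b, hfun α l :=
    intervalIntegral.integral_const_mul _ _
  have step3 : ∫ l in a..b, hfun α l ≤ ∫ l in (0:ℝ)..b, hfun α l := by
    rw [← intervalIntegral.integral_add_adjacent_intervals
      (hfun_integrable α hα0 0 a le_rfl ha) hint_h]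
    have : 0 ≤ ∫ l in (0:ℝ)..a, hfun α l :=
      intervalIntegral.integral_nonneg ha (fun l hl => hfun_nonneg hl.1)
    linarith
  have step4 := integral_hfun_le hα0 hb0
  have hCT : 0 ≤ CT T := le_trans zero_le_one (one_le_CT hT)
  calc ∫ l in a..b, l⁻¹ * Sfun M x l ≤ CT T * ∫ l in a..b, hfun α l := by
        rw [← step2]; exact step1
  _ ≤ CT T * (1 + max (Real.log (b / α)) 0) := by
        apply mul_le_mul_of_nonneg_left _ hCT
        exact le_trans step3 step4

/-- Core estimate for part (ii): a single piece. -/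
lemma partII_piece {M T : ℝ} {x : EuclideanSpace ℝ (Fin 2)}
    (hM : 1 ≤ M) (hT : 0 < T) (hx : ∀ i, |x i| ≤ M / 2)
    (hd : 0 < latticeDist M x) {lam : ℝ} (hlam0 : 0 < lam) (hlam1 : lam ≤ 1)
    {u v : ℝ} (hu : 0 ≤ u) (huv : u ≤ v) (hv' : v ≤ 2 * T) :
    ∫ l in u..v, l⁻¹ * Sfun M x l ≤
      (CT T / (latticeDist M x ^ 2 / 8) ^ lam) * ((v - u) ^ lam / lam) := by
  set d := latticeDist M x with hdd
  set α := d ^ 2 / 8 with hα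
  have hα0 : 0 < α := by positivity
  have hαlam : 0 < α ^ lam := Real.rpow_pos_of_pos hα0 _
  have hv0 : 0 ≤ v := le_trans hu huv
  have hu' : u ≤ 2 * T := le_trans huv hv'
  have hCT : 0 ≤ CT T := le_trans zero_le_one (one_le_CT hT)
  have hint_f := f_integrable hM hT hx hd hu hu' hv0 hv'
  have hint_r : IntervalIntegrable (fun l : ℝ => l ^ (lam - 1)) volume u v :=
    intervalIntegral.intervalIntegrable_rpow' (by linarith)
  have step1 : ∫ l in u..v, l⁻¹ * Sfun M x l ≤
      ∫ l in u..v, (CT T / α ^ lam) * l ^ (lam - 1) := by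
    apply intervalIntegral.integral_mono_on huv hint_f (hint_r.const_mul _)
    intro l hl
    rcases eq_or_lt_of_le (le_trans hu hl.1) with h | h
    · rw [← h, f_zero]
      have h1 : (0:ℝ) ≤ (0:ℝ) ^ (lam - 1) := Real.rpow_nonneg le_rfl _
      positivity
    · calc l⁻¹ * Sfun M x l ≤ CT T * hfun α l :=
            f_le_hfun hM hT hx ⟨h, le_trans hl.2 hv'⟩
      _ ≤ CT T * (l ^ (lam - 1) / α ^ lam) :=
            mul_le_mul_of_nonneg_left (hfun_le_rpow hα0 hlam0 hlam1 h) hCT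
      _ = (CT T / α ^ lam) * l ^ (lam - 1) := by ring
  have step2 : ∫ l in u..v, (CT T / α ^ lam) * l ^ (lam - 1)
      = (CT T / α ^ lam) * ((v ^ lam - u ^ lam) / lam) := by
    rw [intervalIntegral.integral_const_mul,
      integral_rpow (Or.inl (by linarith : (-1:ℝ) < lam - 1))]
    congr 1
    rw [sub_add_cancel]
  have step3 : (v ^ lam - u ^ lam) / lam ≤ (v - u) ^ lam / lam := by
    exact div_le_div_of_nonneg_right (rpow_sub_le hu huv hlam0.le hlam1) hlam0.le
  calc ∫ l in u..v, l⁻¹ * Sfun M x l ≤ (CT T / α ^ lam) * ((v ^ lam - u ^ lam) / lam) := by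
        rw [← step2]; exact step1
  _ ≤ (CT T / α ^ lam) * ((v - u) ^ lam / lam) := by
        apply mul_le_mul_of_nonneg_left step3 (by positivity)

/-- Reduction to the fundamental domain. -/
lemma reduce (M : ℝ) (hM : 1 ≤ M) (x : EuclideanSpace ℝ (Fin 2)) :
    ∃ x' : EuclideanSpace ℝ (Fin 2), (∀ i, |x' i| ≤ M / 2) ∧
      latticeDist M x' = latticeDist M x ∧
      (∀ t₁ t₂ : ℝ, covKernel M t₁ t₂ x' = covKernel M t₁ t₂ x) := by
  have hM0 : (0:ℝ) < M := lt_of_lt_of_le one_pos hM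
  refine ⟨x - latticePt M (fun i => round (x i / M)), ?_, ?_, ?_⟩
  · intro i
    have h1 : |x i / M - round (x i / M)| ≤ 1 / 2 := abs_sub_round _
    have h2 : (x - latticePt M (fun i => round (x i / M))) i
        = M * (x i / M - round (x i / M)) := by
      simp only [PiLp.sub_apply, latticePt_apply]
      field_simp
    rw [h2, abs_mul, abs_of_pos hM0]
    calc M * |x i / M - round (x i / M)| ≤ M * (1/2) :=
          mul_le_mul_of_nonneg_left h1 hM0.le
    _ = M / 2 := by ring
  · exact latticeDist_sub_eq M x _
  · intro t₁ t₂; exact covKernel_shift M t₁ t₂ x _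

end CovAux

open CovAux

/-- **Bounds on the heat-kernel covariance:** (i) the logarithmic bound
`𝒦_M(t₁,t₂;x) ≤ C (1 + log₊(|x|_M⁻¹))`; (ii) the time-regularity bound
`|𝒦_M(t₁,t₁;x) - 𝒦_M(t₁,t₂;x)| ≤ C |t₁-t₂|^λ / |x|_M^{2λ}`. -/
theorem covKernel_bounds :
    (∀ T : ℝ, 0 < T → ∃ C : ℝ, 0 < C ∧ ∀ M : ℝ, 1 ≤ M →
      ∀ t₁ t₂ : ℝ, t₁ ∈ Set.Icc 0 T → t₂ ∈ Set.Icc 0 T →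
      ∀ x : EuclideanSpace ℝ (Fin 2),
        ENNReal.ofReal (covKernel M t₁ t₂ x) ≤
          ENNReal.ofReal C * (1 + logPlusInv (latticeDist M x))) ∧
    (∀ T : ℝ, 0 < T → ∀ lam : ℝ, lam ∈ Set.Ioc (0 : ℝ) 1 → ∃ C : ℝ, 0 < C ∧
      ∀ M : ℝ, 1 ≤ M → ∀ t₁ t₂ : ℝ, t₁ ∈ Set.Icc 0 T → t₂ ∈ Set.Icc 0 T →
      ∀ x : EuclideanSpace ℝ (Fin 2),
        ENNReal.ofReal |covKernel M t₁ t₁ x - covKernel M t₁ t₂ x| ≤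
          ENNReal.ofReal (C * |t₁ - t₂| ^ lam) /
            ENNReal.ofReal (latticeDist M x ^ (2 * lam))) := by
  have hπ : (0:ℝ) < (8 * Real.pi)⁻¹ := by
    have := Real.pi_pos; positivity
  constructor
  · -- Part (i)
    intro T hT
    have hCT1 : (1:ℝ) ≤ CT T := one_le_CT hT
    have hCT0 : (0:ℝ) < CT T := lt_of_lt_of_le one_pos hCT1
    set K := (8 * Real.pi)⁻¹ * CT T with hK
    have hK0 : 0 < K := mul_pos hπ hCT0
    set A := |Real.log (16 * T)| with hA
    have hA0 : 0 ≤ A := abs_nonneg _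
    refine ⟨K * (2 + A) + 1, by nlinarith, ?_⟩
    intro M hM t₁ t₂ ht₁ ht₂ x
    obtain ⟨x', hx', hdist, hcov⟩ := reduce M hM x
    rw [← hcov, ← hdist]
    set d := latticeDist M x' with hd
    by_cases hd0 : d = 0
    · rw [logPlusInv, if_pos hd0]
      have h1 : (1:ℝ≥0∞) + ⊤ = ⊤ := by simp
      rw [h1, ENNReal.mul_top (ne_of_gt (ENNReal.ofReal_pos.2 (by nlinarith)))]
      exact le_top
    · have hdpos : 0 < d := lt_of_le_of_ne (latticeDist_nonneg M x') (Ne.symm hd0)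
      set L := max (Real.log d⁻¹) 0 with hL
      have hL0 : 0 ≤ L := le_max_right _ _
      have hab : |t₁ - t₂| ≤ t₁ + t₂ := by
        apply abs_le.mpr
        constructor <;> linarith [ht₁.1, ht₂.1]
      have hb' : t₁ + t₂ ≤ 2 * T := by linarith [ht₁.2, ht₂.2]
      have hI := partI_core hM hT hx' hdpos (abs_nonneg _) hab hb'
      rw [← hd] at hI
      -- logarithm estimate
      have hlog : max (Real.log ((t₁ + t₂) / (d ^ 2 / 8))) 0 ≤ A + 2 * L := by
        apply max_le _ (by positivity)
        by_cases hb0 : t₁ + t₂ = 0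
        · rw [hb0, zero_div, Real.log_zero]
          positivity
        · have hbpos : 0 < t₁ + t₂ :=
            lt_of_le_of_ne (by linarith [ht₁.1, ht₂.1]) (Ne.symm hb0)
          rw [Real.log_div (ne_of_gt hbpos) (by positivity)]
          have h1 : Real.log (t₁ + t₂) ≤ Real.log (2 * T) :=
            Real.log_le_log hbpos (by linarith)
          have h2 : Real.log (d ^ 2 / 8) = 2 * Real.log d - Real.log 8 := by
            rw [Real.log_div (by positivity) (by norm_num), Real.log_pow]
            push_cast; ring
          have h3 : Real.log (2 * T) + Real.log 8 = Real.log (16 * T) := by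
            rw [← Real.log_mul (by positivity) (by norm_num)]
            ring_nf
          have h4 : -Real.log d ≤ L := by
            rw [← Real.log_inv]; exact le_max_left _ _
          have h5 : Real.log (16 * T) ≤ A := le_abs_self _
          linarith
      -- real-valued bound
      have hreal : covKernel M t₁ t₂ x' ≤ (K * (2 + A) + 1) * (1 + L) := by
        have e1 : covKernel M t₁ t₂ x'
            = (8 * Real.pi)⁻¹ * ∫ l in |t₁ - t₂|..(t₁ + t₂), l⁻¹ * Sfun M x' l := rfl
        rw [e1]
        have step : (8 * Real.pi)⁻¹ * ∫ l in |t₁ - t₂|..(t₁ + t₂), l⁻¹ * Sfun M x' l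
            ≤ (8 * Real.pi)⁻¹ * (CT T * (1 + (A + 2 * L))) := by
          apply mul_le_mul_of_nonneg_left _ hπ.le
          apply le_trans hI
          apply mul_le_mul_of_nonneg_left _ hCT0.le
          linarith [hlog]
        apply le_trans step
        rw [show (8 * Real.pi)⁻¹ * (CT T * (1 + (A + 2 * L))) = K * (1 + A + 2 * L) by
          rw [hK]; ring]
        nlinarith [mul_nonneg hK0.le hL0, mul_nonneg (mul_nonneg hK0.le hA0) hL0]
      rw [logPlusInv, if_neg hd0]
      calc ENNReal.ofReal (covKernel M t₁ t₂ x')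
          ≤ ENNReal.ofReal ((K * (2 + A) + 1) * (1 + L)) := ENNReal.ofReal_le_ofReal hreal
      _ = ENNReal.ofReal (K * (2 + A) + 1) * ENNReal.ofReal (1 + L) := by
          rw [ENNReal.ofReal_mul (by nlinarith)]
      _ = ENNReal.ofReal (K * (2 + A) + 1) * (1 + ENNReal.ofReal L) := by
          rw [ENNReal.ofReal_add zero_le_one hL0, ENNReal.ofReal_one]
      _ = _ := rfl
  · -- Part (ii)
    intro T hT lam hlam
    obtain ⟨hlam0, hlam1⟩ := hlam
    have hCT1 : (1:ℝ) ≤ CT T := one_le_CT hT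
    have hCT0 : (0:ℝ) < CT T := lt_of_lt_of_le one_pos hCT1
    have hKpos : 0 < 16 * (8 * Real.pi)⁻¹ * CT T / lam := by
      apply div_pos _ hlam0
      nlinarith
    refine ⟨16 * (8 * Real.pi)⁻¹ * CT T / lam + 1, by linarith [hKpos], ?_⟩
    set C := 16 * (8 * Real.pi)⁻¹ * CT T / lam + 1 with hC
    have hC0 : 0 < C := by rw [hC]; linarith [hKpos]
    intro M hM t₁ t₂ ht₁ ht₂ x
    obtain ⟨x', hx', hdist, hcov⟩ := reduce M hM x
    rw [← hcov t₁ t₁, ← hcov t₁ t₂, ← hdist]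
    set d := latticeDist M x' with hd
    by_cases hd0 : d = 0
    · by_cases ht : t₁ = t₂
      · subst ht
        simp
      · have hδ : 0 < |t₁ - t₂| := abs_pos.2 (sub_ne_zero.2 ht)
        have hnum : ENNReal.ofReal (C * |t₁ - t₂| ^ lam) ≠ 0 := by
          apply ne_of_gt
          apply ENNReal.ofReal_pos.2
          exact mul_pos hC0 (Real.rpow_pos_of_pos hδ _)
        rw [hd0, Real.zero_rpow (by positivity), ENNReal.ofReal_zero, ENNReal.div_zero hnum]
        exact le_top
    · have hdpos : 0 < d := lt_of_le_of_ne (latticeDist_nonneg M x') (Ne.symm hd0)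
      set δ := |t₁ - t₂| with hδd
      have hδ0 : 0 ≤ δ := abs_nonneg _
      have hδT : δ ≤ 2 * T := by
        rw [hδd]
        apply abs_le.mpr
        constructor <;> linarith [ht₁.1, ht₁.2, ht₂.1, ht₂.2, hT]
      have hp0 : 0 ≤ t₁ + t₂ := by linarith [ht₁.1, ht₂.1]
      have hpT : t₁ + t₂ ≤ 2 * T := by linarith [ht₁.2, ht₂.2]
      have hr0 : 0 ≤ t₁ + t₁ := by linarith [ht₁.1]
      have hrT : t₁ + t₁ ≤ 2 * T := by linarith [ht₁.2]
      have hδp : δ ≤ t₁ + t₂ := by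
        rw [hδd]
        apply abs_le.mpr
        constructor <;> linarith [ht₁.1, ht₂.1]
      have hI1 := f_integrable hM hT hx' hdpos (le_refl (0:ℝ)) (by linarith) hδ0 hδT
      have hI2 := f_integrable hM hT hx' hdpos hδ0 hδT hp0 hpT
      have hI3 := f_integrable hM hT hx' hdpos hp0 hpT hr0 hrT
      set f : ℝ → ℝ := fun l => l⁻¹ * Sfun M x' l with hf
      set Av := ∫ l in (0:ℝ)..δ, f l with hAv
      set Bv := ∫ l in δ..(t₁ + t₂), f l with hBv
      set Cv := ∫ l in (t₁ + t₂)..(t₁ + t₁), f l with hCv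
      have hsum : ∫ l in (0:ℝ)..(t₁ + t₁), f l = Av + Bv + Cv := by
        rw [hAv, hBv, hCv, intervalIntegral.integral_add_adjacent_intervals hI1 hI2,
          intervalIntegral.integral_add_adjacent_intervals (hI1.trans hI2) hI3]
      have e1 : covKernel M t₁ t₁ x' = (8 * Real.pi)⁻¹ * (Av + Bv + Cv) := by
        rw [show covKernel M t₁ t₁ x'
            = (8 * Real.pi)⁻¹ * ∫ l in |t₁ - t₁|..(t₁ + t₁), f l from rfl]
        rw [show |t₁ - t₁| = (0:ℝ) by simp, hsum]
      have e2 : covKernel M t₁ t₂ x' = (8 * Real.pi)⁻¹ * Bv := rfl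
      have ediff : covKernel M t₁ t₁ x' - covKernel M t₁ t₂ x'
          = (8 * Real.pi)⁻¹ * (Av + Cv) := by
        rw [e1, e2]; ring
      set α := d ^ 2 / 8 with hα
      have hα0 : 0 < α := by positivity
      set Bd := (CT T / α ^ lam) * (δ ^ lam / lam) with hBd
      have hBd0 : 0 ≤ Bd :=
        mul_nonneg (div_nonneg hCT0.le (Real.rpow_nonneg hα0.le _))
          (div_nonneg (Real.rpow_nonneg hδ0 _) hlam0.le)
      have hAle : |Av| ≤ Bd := by
        have hnn : 0 ≤ Av := intervalIntegral.integral_nonneg hδ0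
          (fun l hl => f_nonneg M x' hl.1)
        rw [abs_of_nonneg hnn, hAv, hBd]
        have := partII_piece hM hT hx' hdpos hlam0 hlam1 (le_refl (0:ℝ)) hδ0 hδT
        rw [← hd, ← hα, sub_zero] at this
        exact this
      have hCle : |Cv| ≤ Bd := by
        rcases le_total (t₁ + t₂) (t₁ + t₁) with h | h
        · have hnn : 0 ≤ Cv := intervalIntegral.integral_nonneg h
            (fun l hl => f_nonneg M x' (le_trans hp0 hl.1))
          rw [abs_of_nonneg hnn, hCv, hBd]
          have hpiece := partII_piece hM hT hx' hdpos hlam0 hlam1 hp0 h hrT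
          rw [← hd, ← hα] at hpiece
          have heq : t₁ + t₁ - (t₁ + t₂) = δ := by
            rw [hδd, abs_of_nonneg (by linarith : (0:ℝ) ≤ t₁ - t₂)]; ring
          rwa [heq] at hpiece
        · have hsym : Cv = -∫ l in (t₁ + t₁)..(t₁ + t₂), f l := by
            rw [hCv, intervalIntegral.integral_symm]
          have hnn : 0 ≤ ∫ l in (t₁ + t₁)..(t₁ + t₂), f l :=
            intervalIntegral.integral_nonneg h (fun l hl => f_nonneg M x' (le_trans hr0 hl.1))
          rw [hsym, abs_neg, abs_of_nonneg hnn]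
          have hpiece := partII_piece hM hT hx' hdpos hlam0 hlam1 hr0 h hpT
          rw [← hd, ← hα] at hpiece
          have heq : t₁ + t₂ - (t₁ + t₁) = δ := by
            rw [hδd, abs_of_nonpos (by linarith : t₁ - t₂ ≤ 0)]; ring
          rwa [heq] at hpiece
      -- combine
      have habs : |covKernel M t₁ t₁ x' - covKernel M t₁ t₂ x'|
          ≤ (8 * Real.pi)⁻¹ * (2 * Bd) := by
        rw [ediff, abs_mul, abs_of_pos hπ]
        apply mul_le_mul_of_nonneg_left _ hπ.le
        calc |Av + Cv| ≤ |Av| + |Cv| := abs_add_le _ _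
        _ ≤ 2 * Bd := by linarith
      -- estimate Bd
      set D := d ^ (2 * lam) with hD
      have hDpos : 0 < D := Real.rpow_pos_of_pos hdpos _
      have hαD : α ^ lam = D / (8:ℝ) ^ lam := by
        rw [hα, Real.div_rpow (by positivity) (by norm_num), hD]
        congr 1
        rw [← Real.rpow_natCast d 2, ← Real.rpow_mul hdpos.le]
        norm_num
      have h8 : (8:ℝ) ^ lam ≤ 8 := by
        calc (8:ℝ) ^ lam ≤ (8:ℝ) ^ (1:ℝ) :=
              Real.rpow_le_rpow_of_exponent_le (by norm_num) hlam1
        _ = 8 := Real.rpow_one _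
      have h8pos : (0:ℝ) < (8:ℝ) ^ lam := Real.rpow_pos_of_pos (by norm_num) _
      have hα_ge : D / 8 ≤ α ^ lam := by
        rw [hαD]
        apply div_le_div_of_nonneg_left hDpos.le h8pos h8
      have hCTα : CT T / α ^ lam ≤ 8 * CT T / D := by
        have h1 : CT T / α ^ lam ≤ CT T / (D / 8) :=
          div_le_div_of_nonneg_left hCT0.le (by positivity) hα_ge
        have h2 : CT T / (D / 8) = 8 * CT T / D := by
          field_simp
        linarith
      have hfinal : |covKernel M t₁ t₁ x' - covKernel M t₁ t₂ x'|
          ≤ C * δ ^ lam / D := by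
        have hδlam : 0 ≤ δ ^ lam := Real.rpow_nonneg hδ0 _
        have hBd2 : Bd ≤ (8 * CT T / D) * (δ ^ lam / lam) := by
          rw [hBd]
          apply mul_le_mul_of_nonneg_right hCTα (by positivity)
        have hchain : (8 * Real.pi)⁻¹ * (2 * Bd)
            ≤ (8 * Real.pi)⁻¹ * (2 * ((8 * CT T / D) * (δ ^ lam / lam))) := by
          apply mul_le_mul_of_nonneg_left _ hπ.le
          linarith
        have heq : (8 * Real.pi)⁻¹ * (2 * ((8 * CT T / D) * (δ ^ lam / lam)))
            = (16 * (8 * Real.pi)⁻¹ * CT T / lam) * δ ^ lam / D := by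
          field_simp
          ring
        have hlast : (16 * (8 * Real.pi)⁻¹ * CT T / lam) * δ ^ lam / D
            ≤ C * δ ^ lam / D := by
          apply div_le_div_of_nonneg_right _ hDpos.le
          apply mul_le_mul_of_nonneg_right _ hδlam
          rw [hC]; linarith
        linarith [habs, hchain]
      calc ENNReal.ofReal |covKernel M t₁ t₁ x' - covKernel M t₁ t₂ x'|
          ≤ ENNReal.ofReal (C * δ ^ lam / D) := ENNReal.ofReal_le_ofReal hfinal
      _ = ENNReal.ofReal (C * δ ^ lam) / ENNReal.ofReal D := by
          rw [ENNReal.ofReal_div_of_pos hDpos]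
      _ = _ := rfl

end
end

section
/- (Iterated integral bounds.) Let γ₁, γ₂ ≥ 0 with γ₁ + γ₂ < 1, and define recursively I₀(t) = 1 and I_{n+1}(t) = ∫_0^t (t−s)^{−γ₁} s^{−γ₂} I_n(s) ds for n ∈ ℕ and t > 0. Then for every γ̃ > γ₁ and every T < ∞, there exists C < ∞ such that uniformly over n ∈ ℕ and 0 < t ≤ T, I_n(t) ≤ C / (n!)^{1−γ̃}. -/
open MeasureTheory

noncomputable section

/-- The iterated integrals `I₀(t) = 1`,
`I_{n+1}(t) = ∫₀ᵗ (t-s)^{-γ₁} s^{-γ₂} I_n(s) ds`. -/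
def iterInt (γ₁ γ₂ : ℝ) : ℕ → ℝ → ℝ
  | 0, _ => 1
  | n + 1, t => ∫ s in (0 : ℝ)..t, (t - s) ^ (-γ₁) * s ^ (-γ₂) * iterInt γ₁ γ₂ n s

namespace IterIntAux

open intervalIntegral Set

/-- The beta-type coefficient integrals. -/
def Jint (γ₁ γ₂ : ℝ) (k : ℕ) : ℝ :=
  ∫ u in (0:ℝ)..1, (1 - u) ^ (-γ₁) * u ^ ((k : ℝ) * (1 - (γ₁ + γ₂)) - γ₂)

/-- Integrability near the left endpoint. -/
lemma integrable_left {p : ℝ} (q : ℝ) (hp : -1 < p) :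
    IntervalIntegrable (fun v : ℝ => v ^ p * (1 - v) ^ q) volume 0 (1/2) := by
  have hmeas : AEStronglyMeasurable (fun v : ℝ => v ^ p * (1 - v) ^ q)
      (volume.restrict (Set.uIoc (0:ℝ) (1/2))) :=
    (by fun_prop : Measurable fun v : ℝ => v ^ p * (1 - v) ^ q).aestronglyMeasurable
  have hg : IntervalIntegrable (fun v : ℝ => max 1 ((2:ℝ) ^ (-q)) * v ^ p)
      volume 0 (1/2) := (intervalIntegrable_rpow' hp).const_mul _
  refine hg.mono_fun' hmeas ?_
  filter_upwards [ae_restrict_mem measurableSet_uIoc] with v hv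
  rw [Set.uIoc_of_le (by norm_num : (0:ℝ) ≤ 1/2)] at hv
  obtain ⟨hv0, hv2⟩ := hv
  have h1v : (1:ℝ)/2 ≤ 1 - v := by linarith
  have hq2 : (1 - v) ^ q ≤ max 1 ((2:ℝ) ^ (-q)) := by
    rcases le_or_gt 0 q with hq0 | hq0
    · exact le_max_of_le_left (Real.rpow_le_one (by linarith) (by linarith) hq0)
    · refine le_max_of_le_right ?_
      have h := Real.rpow_le_rpow_of_nonpos (by norm_num : (0:ℝ) < 1/2) h1v hq0.le
      calc (1 - v) ^ q ≤ ((1:ℝ)/2) ^ q := h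
        _ = (2:ℝ) ^ (-q) := by
            rw [one_div, Real.inv_rpow (by norm_num), ← Real.rpow_neg (by norm_num)]
  have hnn : 0 ≤ v ^ p * (1 - v) ^ q :=
    mul_nonneg (Real.rpow_nonneg hv0.le _) (Real.rpow_nonneg (by linarith) _)
  rw [Real.norm_eq_abs, abs_of_nonneg hnn, mul_comm (max 1 ((2:ℝ) ^ (-q))) _]
  exact mul_le_mul_of_nonneg_left hq2 (Real.rpow_nonneg hv0.le _)

/-- Interval integrability of the beta-type integrand. -/
lemma integrable_beta {p q : ℝ} (hp : -1 < p) (hq : -1 < q) :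
    IntervalIntegrable (fun v : ℝ => v ^ p * (1 - v) ^ q) volume 0 1 := by
  have h1 := integrable_left q hp
  have h2 := (integrable_left p hq).comp_sub_left 1
  simp only [sub_zero] at h2
  have he : (fun x : ℝ => (1 - x) ^ q * (1 - (1 - x)) ^ p)
      = fun v : ℝ => v ^ p * (1 - v) ^ q := by
    funext v; rw [sub_sub_cancel, mul_comm]
  rw [he] at h2
  have h2' : IntervalIntegrable (fun v : ℝ => v ^ p * (1 - v) ^ q) volume (1/2) 1 := by
    have h3 := h2.symm
    norm_num at h3
    exact h3
  exact h1.trans h2'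

/-- Scaling substitution `s = t u`. -/
lemma scale {γ₁ : ℝ} (b t : ℝ) (ht : 0 < t) :
    (∫ s in (0:ℝ)..t, (t - s) ^ (-γ₁) * s ^ b)
      = t ^ (1 - γ₁ + b) * ∫ u in (0:ℝ)..1, (1 - u) ^ (-γ₁) * u ^ b := by
  have h2 := intervalIntegral.integral_comp_mul_right (a := (0:ℝ)) (b := 1)
      (fun s => (t - s) ^ (-γ₁) * s ^ b) (ne_of_gt ht)
  simp only [zero_mul, one_mul, smul_eq_mul] at h2
  have h2' : (∫ s in (0:ℝ)..t, (t - s) ^ (-γ₁) * s ^ b)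
      = t * ∫ u in (0:ℝ)..1, (t - u * t) ^ (-γ₁) * (u * t) ^ b := by
    rw [h2, ← mul_assoc, mul_inv_cancel₀ (ne_of_gt ht), one_mul]
  rw [h2']
  have h3 : (∫ u in (0:ℝ)..1, (t - u * t) ^ (-γ₁) * (u * t) ^ b)
      = ∫ u in (0:ℝ)..1, (t ^ (-γ₁) * t ^ b) * ((1 - u) ^ (-γ₁) * u ^ b) := by
    apply intervalIntegral.integral_congr
    intro u hu
    rw [Set.uIcc_of_le zero_le_one] at hu
    obtain ⟨h0u, hu1⟩ := hu
    show (t - u * t) ^ (-γ₁) * (u * t) ^ b = t ^ (-γ₁) * t ^ b * ((1 - u) ^ (-γ₁) * u ^ b)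
    have e1 : t - u * t = t * (1 - u) := by ring
    rw [e1, Real.mul_rpow ht.le (by linarith), Real.mul_rpow h0u ht.le]
    ring
  rw [h3, intervalIntegral.integral_const_mul, ← mul_assoc]
  congr 1
  have h4 : t ^ (1 - γ₁ + b) = t ^ (1:ℝ) * (t ^ (-γ₁) * t ^ b) := by
    rw [← Real.rpow_add ht, ← Real.rpow_add ht]
    congr 1; ring
  rw [h4, Real.rpow_one]

/-- Flip `u ↦ 1 - u`. -/
lemma flip (γ₁ b : ℝ) :
    (∫ u in (0:ℝ)..1, (1 - u) ^ (-γ₁) * u ^ b)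
      = ∫ v in (0:ℝ)..1, v ^ (-γ₁) * (1 - v) ^ b := by
  have h := intervalIntegral.integral_comp_sub_left (a := (0:ℝ)) (b := 1)
      (fun v => v ^ (-γ₁) * (1 - v) ^ b) 1
  simp only [sub_sub_cancel, sub_zero, sub_self] at h
  exact h

/-- Exact formula for the iterated integrals. -/
lemma iterInt_eq {γ₁ γ₂ : ℝ} (hγ₂ : 0 ≤ γ₂) (n : ℕ) (t : ℝ) (ht : 0 < t) :
    iterInt γ₁ γ₂ n t = (∏ k ∈ Finset.range n, Jint γ₁ γ₂ k)
      * t ^ ((n : ℝ) * (1 - (γ₁ + γ₂))) := by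
  induction n generalizing t with
  | zero => simp [iterInt]
  | succ n ih =>
    rw [iterInt]
    have hcong : (∫ s in (0:ℝ)..t, (t - s) ^ (-γ₁) * s ^ (-γ₂) * iterInt γ₁ γ₂ n s)
        = ∫ s in (0:ℝ)..t, (∏ k ∈ Finset.range n, Jint γ₁ γ₂ k)
            * ((t - s) ^ (-γ₁) * s ^ ((n : ℝ) * (1 - (γ₁ + γ₂)) - γ₂)) := by
      apply intervalIntegral.integral_congr_ae
      refine Filter.Eventually.of_forall fun s hs => ?_
      rw [Set.uIoc_of_le ht.le] at hs
      rw [ih s hs.1]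
      have hsr : s ^ (-γ₂) * s ^ ((n : ℝ) * (1 - (γ₁ + γ₂)))
          = s ^ ((n : ℝ) * (1 - (γ₁ + γ₂)) - γ₂) := by
        rw [← Real.rpow_add hs.1]; congr 1; ring
      rw [← hsr]; ring
    rw [hcong, intervalIntegral.integral_const_mul,
      scale ((n : ℝ) * (1 - (γ₁ + γ₂)) - γ₂) t ht, Finset.prod_range_succ]
    have hJ : Jint γ₁ γ₂ n
        = ∫ u in (0:ℝ)..1, (1 - u) ^ (-γ₁) * u ^ ((n : ℝ) * (1 - (γ₁ + γ₂)) - γ₂) := rfl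
    rw [← hJ]
    have he : t ^ (1 - γ₁ + ((n : ℝ) * (1 - (γ₁ + γ₂)) - γ₂))
        = t ^ (((n : ℕ) + 1 : ℝ) * (1 - (γ₁ + γ₂))) := by
      congr 1; push_cast; ring
    rw [he]
    push_cast
    ring

/-- Quantitative bound on the beta-type integral for nonnegative second exponent. -/
lemma Kbound {γ₁ : ℝ} (hγ₁ : 0 ≤ γ₁) (h1 : γ₁ < 1) {b : ℝ} (hb : 0 ≤ b) :
    (∫ v in (0:ℝ)..1, v ^ (-γ₁) * (1 - v) ^ b)
      ≤ (1 / (1 - γ₁) + 1) * (b + 1) ^ (γ₁ - 1) := by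
  have hb1 : (0:ℝ) < b + 1 := by linarith
  set m : ℝ := (b + 1)⁻¹ with hm
  have hm0 : 0 < m := by positivity
  have hm1 : m ≤ 1 := by
    rw [hm]; rw [inv_le_one_iff₀]; right; linarith
  have hint : IntervalIntegrable (fun v : ℝ => v ^ (-γ₁) * (1 - v) ^ b) volume 0 1 :=
    integrable_beta (by linarith) (by linarith)
  have hsub1 : Set.uIcc (0:ℝ) m ⊆ Set.uIcc (0:ℝ) 1 := by
    rw [Set.uIcc_of_le hm0.le, Set.uIcc_of_le zero_le_one]
    exact Set.Icc_subset_Icc le_rfl hm1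
  have hsub2 : Set.uIcc m (1:ℝ) ⊆ Set.uIcc (0:ℝ) 1 := by
    rw [Set.uIcc_of_le hm1, Set.uIcc_of_le zero_le_one]
    exact Set.Icc_subset_Icc hm0.le le_rfl
  have hsplit : (∫ v in (0:ℝ)..1, v ^ (-γ₁) * (1 - v) ^ b)
      = (∫ v in (0:ℝ)..m, v ^ (-γ₁) * (1 - v) ^ b)
        + ∫ v in m..1, v ^ (-γ₁) * (1 - v) ^ b :=
    (intervalIntegral.integral_add_adjacent_intervals
      (hint.mono_set hsub1) (hint.mono_set hsub2)).symm
  have hmrpow : ∀ x : ℝ, m ^ x = (b + 1) ^ (-x) := by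
    intro x
    rw [hm, Real.inv_rpow hb1.le, ← Real.rpow_neg hb1.le]
  have hp1 : (∫ v in (0:ℝ)..m, v ^ (-γ₁) * (1 - v) ^ b)
      ≤ (b + 1) ^ (γ₁ - 1) / (1 - γ₁) := by
    have h1' : (∫ v in (0:ℝ)..m, v ^ (-γ₁) * (1 - v) ^ b)
        ≤ ∫ v in (0:ℝ)..m, v ^ (-γ₁) := by
      apply intervalIntegral.integral_mono_on hm0.le (hint.mono_set hsub1)
        (intervalIntegral.intervalIntegrable_rpow' (by linarith))
      intro v hv
      calc v ^ (-γ₁) * (1 - v) ^ b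
          ≤ v ^ (-γ₁) * 1 := by
            apply mul_le_mul_of_nonneg_left ?_ (Real.rpow_nonneg hv.1 _)
            exact Real.rpow_le_one (by linarith [hv.2, hm1]) (by linarith [hv.1]) hb
        _ = v ^ (-γ₁) := mul_one _
    have h2' : (∫ v in (0:ℝ)..m, v ^ (-γ₁)) = (b + 1) ^ (γ₁ - 1) / (1 - γ₁) := by
      rw [integral_rpow (Or.inl (by linarith))]
      rw [Real.zero_rpow (by intro hc; linarith [hc] : -γ₁ + 1 ≠ 0), sub_zero]
      rw [hmrpow (-γ₁ + 1)]
      rw [show -(-γ₁ + 1) = γ₁ - 1 by ring, show -γ₁ + 1 = 1 - γ₁ by ring]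
    linarith [h1', h2'.le, h2'.ge]
  have hp2 : (∫ v in m..1, v ^ (-γ₁) * (1 - v) ^ b) ≤ (b + 1) ^ (γ₁ - 1) := by
    have hintc : IntervalIntegrable (fun v : ℝ => m ^ (-γ₁) * (1 - v) ^ b) volume m 1 := by
      apply IntervalIntegrable.const_mul
      have h := (intervalIntegral.intervalIntegrable_rpow'
        (show (-1:ℝ) < b by linarith) (a := 0) (b := 1 - m)).comp_sub_left 1
      simp only [sub_zero, sub_sub_cancel] at h
      exact h.symm
    have h1' : (∫ v in m..1, v ^ (-γ₁) * (1 - v) ^ b)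
        ≤ ∫ v in m..1, m ^ (-γ₁) * (1 - v) ^ b := by
      apply intervalIntegral.integral_mono_on hm1 (hint.mono_set hsub2) hintc
      intro v hv
      exact mul_le_mul_of_nonneg_right
        (Real.rpow_le_rpow_of_nonpos hm0 hv.1 (by linarith))
        (Real.rpow_nonneg (by linarith [hv.2]) _)
    have h2' : (∫ v in m..1, m ^ (-γ₁) * (1 - v) ^ b)
        = m ^ (-γ₁) * ((1 - m) ^ (b + 1) / (b + 1)) := by
      rw [intervalIntegral.integral_const_mul]
      congr 1
      have h := intervalIntegral.integral_comp_sub_left (a := m) (b := 1)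
        (fun x : ℝ => x ^ b) 1
      simp only [sub_self] at h
      rw [h, integral_rpow (Or.inl (by linarith))]
      rw [Real.zero_rpow (by positivity), sub_zero]
    have h3' : m ^ (-γ₁) * ((1 - m) ^ (b + 1) / (b + 1)) ≤ (b + 1) ^ (γ₁ - 1) := by
      have hle1 : (1 - m) ^ (b + 1) ≤ 1 :=
        Real.rpow_le_one (by linarith) (by linarith) (by linarith)
      have step : m ^ (-γ₁) * ((1 - m) ^ (b + 1) / (b + 1)) ≤ m ^ (-γ₁) * (1 / (b + 1)) := by
        apply mul_le_mul_of_nonneg_left ?_ (Real.rpow_nonneg hm0.le _)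
        exact div_le_div_of_nonneg_right hle1 hb1.le
      have heq : m ^ (-γ₁) * (1 / (b + 1)) = (b + 1) ^ (γ₁ - 1) := by
        rw [hmrpow (-γ₁), neg_neg, Real.rpow_sub hb1, Real.rpow_one]
        ring
      linarith [step, heq.le, heq.ge]
    linarith [h1', h2'.le, h2'.ge, h3']
  rw [hsplit]
  have : (1 / (1 - γ₁) + 1) * (b + 1) ^ (γ₁ - 1)
      = (b + 1) ^ (γ₁ - 1) / (1 - γ₁) + (b + 1) ^ (γ₁ - 1) := by ring
  linarith [hp1, hp2, this.le, this.ge]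

/-- Monotonicity of the beta-type integral in the exponent (negative exponents). -/
lemma Kmono {γ₁ : ℝ} (hγ₁ : 0 ≤ γ₁) (h1 : γ₁ < 1) {b b' : ℝ} (hb : -1 < b) (hb0 : b < 0)
    (hbb : b ≤ b') (hb'0 : b' < 0) :
    (∫ v in (0:ℝ)..1, v ^ (-γ₁) * (1 - v) ^ b')
      ≤ ∫ v in (0:ℝ)..1, v ^ (-γ₁) * (1 - v) ^ b := by
  apply intervalIntegral.integral_mono_on zero_le_one
    (integrable_beta (by linarith) (by linarith))
    (integrable_beta (by linarith) (by linarith))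
  intro v hv
  obtain ⟨hv0, hv1⟩ := hv
  apply mul_le_mul_of_nonneg_left ?_ (Real.rpow_nonneg hv0 _)
  rcases hv1.eq_or_lt with h | h
  · rw [h, sub_self, Real.zero_rpow (ne_of_lt hb0), Real.zero_rpow (ne_of_lt hb'0)]
  · exact Real.rpow_le_rpow_of_exponent_ge (by linarith) (by linarith) hbb

lemma Jnonneg {γ₁ γ₂ : ℝ} (k : ℕ) : 0 ≤ Jint γ₁ γ₂ k := by
  apply intervalIntegral.integral_nonneg zero_le_one
  intro u hu
  exact mul_nonneg (Real.rpow_nonneg (by linarith [hu.2]) _)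
    (Real.rpow_nonneg hu.1 _)

/-- Per-index bound on the coefficients. -/
lemma Jbound {γ₁ γ₂ : ℝ} (hγ₁ : 0 ≤ γ₁) (hγ₂ : 0 ≤ γ₂) (hsum : γ₁ + γ₂ < 1) :
    ∃ c : ℝ, 0 ≤ c ∧ ∀ k : ℕ, Jint γ₁ γ₂ k ≤ c * ((k : ℝ) + 1) ^ (γ₁ - 1) := by
  have h1γ : 0 < 1 - (γ₁ + γ₂) := by linarith
  have h11 : γ₁ < 1 := by linarith
  set c₀ : ℝ := ∫ v in (0:ℝ)..1, v ^ (-γ₁) * (1 - v) ^ (-γ₂) with hc₀def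
  have hc₀ : 0 ≤ c₀ := by
    apply intervalIntegral.integral_nonneg zero_le_one
    intro u hu
    exact mul_nonneg (Real.rpow_nonneg hu.1 _)
      (Real.rpow_nonneg (by linarith [hu.2]) _)
  set Nr : ℝ := max 1 (⌈γ₂ / (1 - (γ₁ + γ₂))⌉₊ : ℝ) with hNrdef
  have hNr : (0:ℝ) < Nr := lt_of_lt_of_le one_pos (le_max_left _ _)
  refine ⟨max ((1 / (1 - γ₁) + 1) * (1 - (γ₁ + γ₂)) ^ (γ₁ - 1)) (c₀ * Nr ^ (1 - γ₁)),
    le_max_of_le_right (mul_nonneg hc₀ (Real.rpow_nonneg hNr.le _)), fun k => ?_⟩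
  have hJK : Jint γ₁ γ₂ k
      = ∫ v in (0:ℝ)..1, v ^ (-γ₁) * (1 - v) ^ ((k : ℝ) * (1 - (γ₁ + γ₂)) - γ₂) :=
    flip γ₁ _
  set b : ℝ := (k : ℝ) * (1 - (γ₁ + γ₂)) - γ₂ with hbdef
  have hk0 : (0:ℝ) ≤ (k : ℝ) * (1 - (γ₁ + γ₂)) := by positivity
  have hbγ₂ : -γ₂ ≤ b := by rw [hbdef]; linarith
  have hbm1 : (-1:ℝ) < b := by linarith
  have hk1 : (0:ℝ) < (k : ℝ) + 1 := by positivity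
  have hknn : (0:ℝ) ≤ ((k : ℝ) + 1) ^ (γ₁ - 1) := Real.rpow_nonneg hk1.le _
  rcases le_or_gt 0 b with hb0 | hb0
  · have h5 := Kbound hγ₁ h11 hb0
    have hcomp : (b + 1) ^ (γ₁ - 1)
        ≤ (1 - (γ₁ + γ₂)) ^ (γ₁ - 1) * ((k : ℝ) + 1) ^ (γ₁ - 1) := by
      rw [← Real.mul_rpow h1γ.le hk1.le]
      apply Real.rpow_le_rpow_of_nonpos (mul_pos h1γ hk1) ?_ (by linarith)
      rw [hbdef]; nlinarith [hk0, hγ₁, h1γ]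
    calc Jint γ₁ γ₂ k ≤ (1 / (1 - γ₁) + 1) * (b + 1) ^ (γ₁ - 1) := by rw [hJK]; exact h5
      _ ≤ (1 / (1 - γ₁) + 1) * ((1 - (γ₁ + γ₂)) ^ (γ₁ - 1) * ((k : ℝ) + 1) ^ (γ₁ - 1)) := by
          apply mul_le_mul_of_nonneg_left hcomp
          have : (0:ℝ) < 1 / (1 - γ₁) := one_div_pos.mpr (by linarith)
          linarith
      _ = ((1 / (1 - γ₁) + 1) * (1 - (γ₁ + γ₂)) ^ (γ₁ - 1)) * ((k : ℝ) + 1) ^ (γ₁ - 1) := by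
          ring
      _ ≤ _ := mul_le_mul_of_nonneg_right (le_max_left _ _) hknn
  · have hγ₂pos : 0 < γ₂ := by linarith
    have hKb : (∫ v in (0:ℝ)..1, v ^ (-γ₁) * (1 - v) ^ b) ≤ c₀ :=
      Kmono hγ₁ h11 (by linarith) (by linarith) hbγ₂ hb0
    have hkN : (k : ℝ) + 1 ≤ Nr := by
      have hlt : (k : ℝ) < γ₂ / (1 - (γ₁ + γ₂)) := by
        rw [lt_div_iff₀ h1γ]
        have : b < 0 := hb0
        rw [hbdef] at this; linarith
      have h7 : k < ⌈γ₂ / (1 - (γ₁ + γ₂))⌉₊ := Nat.lt_ceil.mpr hlt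
      have h8 : (k : ℝ) + 1 ≤ (⌈γ₂ / (1 - (γ₁ + γ₂))⌉₊ : ℝ) := by
        exact_mod_cast Nat.succ_le_of_lt h7
      exact h8.trans (le_max_right _ _)
    have hmono2 : Nr ^ (γ₁ - 1) ≤ ((k : ℝ) + 1) ^ (γ₁ - 1) :=
      Real.rpow_le_rpow_of_nonpos hk1 hkN (by linarith)
    calc Jint γ₁ γ₂ k ≤ c₀ := by rw [hJK]; exact hKb
      _ = (c₀ * Nr ^ (1 - γ₁)) * Nr ^ (γ₁ - 1) := by
          rw [mul_assoc, ← Real.rpow_add hNr]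
          rw [show (1 - γ₁) + (γ₁ - 1) = 0 by ring, Real.rpow_zero, mul_one]
      _ ≤ (c₀ * Nr ^ (1 - γ₁)) * ((k : ℝ) + 1) ^ (γ₁ - 1) :=
          mul_le_mul_of_nonneg_left hmono2
            (mul_nonneg hc₀ (Real.rpow_nonneg hNr.le _))
      _ ≤ _ := mul_le_mul_of_nonneg_right (le_max_right _ _) hknn

end IterIntAux

/-- **Iterated integral bounds:** for `γ₁ + γ₂ < 1` and any `γ̃ > γ₁`,
`I_n(t) ≤ C / (n!)^{1 - γ̃}` uniformly over `n` and `0 < t ≤ T`. -/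
theorem iterInt_bound (γ₁ γ₂ : ℝ) (hγ₁ : 0 ≤ γ₁) (hγ₂ : 0 ≤ γ₂) (hsum : γ₁ + γ₂ < 1)
    (γt : ℝ) (hγt : γ₁ < γt) (T : ℝ) :
    ∃ C : ℝ, ∀ n : ℕ, ∀ t : ℝ, 0 < t → t ≤ T →
      iterInt γ₁ γ₂ n t ≤ C / ((n.factorial : ℝ)) ^ (1 - γt) := by
  classical
  have h11 : γ₁ < 1 := by linarith
  have h1γ : 0 < 1 - (γ₁ + γ₂) := by linarith
  obtain ⟨c₁, hc₁0, hc₁⟩ := IterIntAux.Jbound hγ₁ hγ₂ hsum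
  set M : ℝ := max 1 T with hMdef
  have hM1 : (1:ℝ) ≤ M := le_max_left _ _
  have hM0 : (0:ℝ) < M := by linarith
  set r : ℝ := c₁ * M ^ (1 - (γ₁ + γ₂)) with hrdef
  have hr0 : 0 ≤ r := mul_nonneg hc₁0 (Real.rpow_nonneg hM0.le _)
  have hε : 0 < γt - γ₁ := by linarith
  set R : ℝ := max r 1 with hRdef
  have hR1 : (1:ℝ) ≤ R := le_max_right _ _
  have hR0 : (0:ℝ) < R := by linarith
  set x : ℝ := R ^ (γt - γ₁)⁻¹ with hxdef
  have hx0 : 0 < x := Real.rpow_pos_of_pos hR0 _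
  obtain ⟨C₀, hC₀⟩ := (FloorSemiring.tendsto_pow_div_factorial_atTop (K := ℝ) x).bddAbove_range
  have hC₀' : ∀ n : ℕ, x ^ n ≤ C₀ * (n.factorial : ℝ) := by
    intro n
    have h := hC₀ (Set.mem_range_self n)
    have hfp : (0:ℝ) < (n.factorial : ℝ) := by exact_mod_cast n.factorial_pos
    rw [div_le_iff₀ hfp] at h
    linarith [h]
  have hC₀pos : (0:ℝ) < C₀ := by
    have h := hC₀' 0
    simp at h
    linarith [h]
  refine ⟨C₀ ^ (γt - γ₁), ?_⟩
  intro n t ht htT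
  have hfac0 : (0:ℝ) < (n.factorial : ℝ) := by exact_mod_cast n.factorial_pos
  rw [IterIntAux.iterInt_eq hγ₂ n t ht]
  have hProd : (∏ k ∈ Finset.range n, IterIntAux.Jint γ₁ γ₂ k)
      ≤ c₁ ^ n * (n.factorial : ℝ) ^ (γ₁ - 1) := by
    have h1 : (∏ k ∈ Finset.range n, IterIntAux.Jint γ₁ γ₂ k)
        ≤ ∏ k ∈ Finset.range n, c₁ * ((k : ℝ) + 1) ^ (γ₁ - 1) :=
      Finset.prod_le_prod (fun k _ => IterIntAux.Jnonneg k) (fun k _ => hc₁ k)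
    have h2 : (∏ k ∈ Finset.range n, c₁ * ((k : ℝ) + 1) ^ (γ₁ - 1))
        = c₁ ^ n * (n.factorial : ℝ) ^ (γ₁ - 1) := by
      rw [Finset.prod_mul_distrib, Finset.prod_const, Finset.card_range]
      congr 1
      rw [Real.finset_prod_rpow _ _ (fun i _ => by positivity) _]
      congr 1
      rw [← Finset.prod_range_add_one_eq_factorial, Nat.cast_prod]
      push_cast
      rfl
    linarith [h1, h2.le, h2.ge]
  have htM : t ^ ((n : ℝ) * (1 - (γ₁ + γ₂))) ≤ (M ^ (1 - (γ₁ + γ₂))) ^ n := by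
    calc t ^ ((n : ℝ) * (1 - (γ₁ + γ₂)))
        ≤ M ^ ((n : ℝ) * (1 - (γ₁ + γ₂))) :=
          Real.rpow_le_rpow ht.le (htT.trans (le_max_right _ _)) (by positivity)
      _ = (M ^ (1 - (γ₁ + γ₂))) ^ n := by
          rw [mul_comm, Real.rpow_mul hM0.le, Real.rpow_natCast]
  have step1 : (∏ k ∈ Finset.range n, IterIntAux.Jint γ₁ γ₂ k)
        * t ^ ((n : ℝ) * (1 - (γ₁ + γ₂)))
      ≤ (c₁ ^ n * (n.factorial : ℝ) ^ (γ₁ - 1)) * (M ^ (1 - (γ₁ + γ₂))) ^ n :=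
    mul_le_mul hProd htM (Real.rpow_nonneg ht.le _)
      (by positivity)
  have step2 : (c₁ ^ n * (n.factorial : ℝ) ^ (γ₁ - 1)) * (M ^ (1 - (γ₁ + γ₂))) ^ n
      = r ^ n * (n.factorial : ℝ) ^ (γ₁ - 1) := by
    rw [hrdef, mul_pow]; ring
  have key : r ^ n ≤ C₀ ^ (γt - γ₁) * ((n.factorial : ℝ)) ^ (γt - γ₁) := by
    have h1 : r ^ n ≤ R ^ n := pow_le_pow_left₀ hr0 (le_max_left _ _) n
    have h2 : R ^ n = (x ^ n) ^ (γt - γ₁) := by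
      rw [← Real.rpow_natCast x n, hxdef, ← Real.rpow_mul hR0.le,
        ← Real.rpow_mul hR0.le, ← Real.rpow_natCast R n]
      congr 1
      field_simp
    have h3 : (x ^ n) ^ (γt - γ₁) ≤ (C₀ * (n.factorial : ℝ)) ^ (γt - γ₁) :=
      Real.rpow_le_rpow (by positivity) (hC₀' n) hε.le
    rw [Real.mul_rpow hC₀pos.le hfac0.le] at h3
    calc r ^ n ≤ R ^ n := h1
      _ = (x ^ n) ^ (γt - γ₁) := h2
      _ ≤ C₀ ^ (γt - γ₁) * ((n.factorial : ℝ)) ^ (γt - γ₁) := h3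
  have hfinal : r ^ n * (n.factorial : ℝ) ^ (γ₁ - 1)
      ≤ C₀ ^ (γt - γ₁) * (n.factorial : ℝ) ^ (γt - 1) := by
    calc r ^ n * (n.factorial : ℝ) ^ (γ₁ - 1)
        ≤ (C₀ ^ (γt - γ₁) * ((n.factorial : ℝ)) ^ (γt - γ₁)) * (n.factorial : ℝ) ^ (γ₁ - 1) :=
          mul_le_mul_of_nonneg_right key (Real.rpow_nonneg hfac0.le _)
      _ = C₀ ^ (γt - γ₁) * (n.factorial : ℝ) ^ (γt - 1) := by
          rw [mul_assoc, ← Real.rpow_add hfac0]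
          congr 2
          ring
  have hdiv : C₀ ^ (γt - γ₁) / ((n.factorial : ℝ)) ^ (1 - γt)
      = C₀ ^ (γt - γ₁) * (n.factorial : ℝ) ^ (γt - 1) := by
    rw [div_eq_mul_inv, ← Real.rpow_neg hfac0.le]
    congr 2
    ring
  rw [hdiv]
  calc (∏ k ∈ Finset.range n, IterIntAux.Jint γ₁ γ₂ k)
        * t ^ ((n : ℝ) * (1 - (γ₁ + γ₂)))
      ≤ r ^ n * (n.factorial : ℝ) ^ (γ₁ - 1) := by rw [← step2]; exact step1
    _ ≤ C₀ ^ (γt - γ₁) * (n.factorial : ℝ) ^ (γt - 1) := hfinal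

end
end
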